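/- arXiv:1906.05527 — 4 statements merged into one kernel-verified Lean document; each statement's English description precedes it below -/
import Mathlib

section
/- Let f : ℝ^n → ℝ have L_f-Lipschitz continuous gradient and let μ > 0. Then the Gaussian smoothing f_μ also has L_f-Lipschitz continuous gradient, and for every x ∈ ℝ^n one has |f_μ(x) − f(x)| ≤ (μ²/2)·L_f·n and ‖∇f_μ(x) − ∇f(x)‖ ≤ (μ/2)·L_f·(n+3)^{3/2}. -/
open MeasureTheory ProbabilityTheory Real Filter
open scoped BigOperators ENNReal RealInnerProductSpace

noncomputable section

lemma gexp_eq (x : ℝ) : rexp (-x ^ 2 / 2) = rexp (-(1/2 : ℝ) * x ^ 2) := by ring_nf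

lemma integrable_gexp : Integrable (fun x : ℝ => rexp (-x ^ 2 / 2)) := by
  simp_rw [gexp_eq]; exact integrable_exp_neg_mul_sq (by norm_num)

lemma integrable_pow_gexp (k : ℕ) :
    Integrable (fun x : ℝ => x ^ k * rexp (-x ^ 2 / 2)) := by
  have h := integrable_rpow_mul_exp_neg_mul_sq (b := 1/2) (by norm_num) (s := (k : ℝ))
    (lt_of_lt_of_le (by norm_num) (Nat.cast_nonneg k))
  simp_rw [Real.rpow_natCast, ← gexp_eq] at h
  exact h

lemma integrable_abs_pow_gexp (k : ℕ) :
    Integrable (fun x : ℝ => |x| ^ k * rexp (-x ^ 2 / 2)) := by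
  refine Integrable.mono' (integrable_gexp.add (integrable_pow_gexp (2 * k)))
    (Continuous.aestronglyMeasurable (by continuity)) (ae_of_all _ fun x => ?_)
  have hx : |x| ^ k ≤ 1 + x ^ (2 * k) := by
    rcases le_total (|x|) 1 with h | h
    · have h1 : |x| ^ k ≤ 1 := pow_le_one₀ (abs_nonneg x) h
      nlinarith [pow_nonneg (sq_nonneg x) k, (by rw [pow_mul] : x ^ (2*k) = (x^2)^k)]
    · have h1 : |x| ^ k ≤ |x| ^ (2 * k) := pow_le_pow_right₀ h (by omega)
      have h2 : |x| ^ (2 * k) = x ^ (2 * k) := by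
        rw [pow_mul, pow_mul, sq_abs]
      nlinarith
  have he : 0 ≤ rexp (-x ^ 2 / 2) := (Real.exp_pos _).le
  rw [Real.norm_eq_abs, abs_of_nonneg (by positivity)]
  calc |x| ^ k * rexp (-x ^ 2 / 2) ≤ (1 + x ^ (2*k)) * rexp (-x ^ 2 / 2) := by nlinarith
    _ = rexp (-x ^ 2 / 2) + x ^ (2*k) * rexp (-x ^ 2 / 2) := by ring

lemma integral_gexp : ∫ x : ℝ, rexp (-x ^ 2 / 2) = √(2 * π) := by
  simp_rw [gexp_eq]
  rw [integral_gaussian]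
  norm_num
  rw [mul_comm]

lemma integral_mul_gexp_eq_zero : ∫ x : ℝ, x * rexp (-x ^ 2 / 2) = 0 := by
  have h : ∫ x : ℝ, (fun y : ℝ => y * rexp (-y ^ 2 / 2)) (-x)
      = ∫ x : ℝ, x * rexp (-x ^ 2 / 2) :=
    integral_neg_eq_self (fun y : ℝ => y * rexp (-y ^ 2 / 2)) volume
  simp only [neg_sq, neg_mul] at h
  rw [integral_neg] at h
  linarith

lemma tendsto_F_top : Tendsto (fun x : ℝ => x * rexp (-x ^ 2 / 2)) atTop (nhds 0) := by
  have h := rpow_mul_exp_neg_mul_sq_isLittleO_exp_neg (b := 1/2) (by norm_num) 1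
  have hv : Tendsto (fun x : ℝ => rexp (-(1/2:ℝ) * x)) atTop (nhds 0) := by
    have : Tendsto (fun x : ℝ => -(1/2:ℝ) * x) atTop atBot :=
      tendsto_id.const_mul_atTop_of_neg (by norm_num)
    exact Real.tendsto_exp_atBot.comp this
  have h0 := h.tendsto_zero_of_tendsto hv
  refine h0.congr' ?_
  filter_upwards [eventually_ge_atTop (0:ℝ)] with x hx
  rw [Real.rpow_one, ← gexp_eq]

lemma hasDerivAt_F (x : ℝ) :
    HasDerivAt (fun x : ℝ => x * rexp (-x ^ 2 / 2))
      ((1 - x ^ 2) * rexp (-x ^ 2 / 2)) x := by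
  have h1 : HasDerivAt (fun x : ℝ => -x ^ 2 / 2) (-x) x := by
    have := ((hasDerivAt_pow 2 x).neg).div_const 2
    exact this.congr_deriv (by norm_num; ring)
  have := (hasDerivAt_id x).mul h1.exp
  exact this.congr_deriv (by simp only [id_eq, one_mul]; ring)

lemma integral_Ioi_sub : ∫ x in Set.Ioi (0:ℝ), (1 - x ^ 2) * rexp (-x ^ 2 / 2) = 0 := by
  have hint : Integrable (fun x : ℝ => (1 - x ^ 2) * rexp (-x ^ 2 / 2)) := by
    refine (integrable_gexp.sub (integrable_pow_gexp 2)).congr (ae_of_all _ fun x => ?_)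
    simp only [Pi.sub_apply]; ring
  have hF := integral_Ioi_of_hasDerivAt_of_tendsto' (a := 0)
    (f := fun x : ℝ => x * rexp (-x ^ 2 / 2))
    (f' := fun x : ℝ => (1 - x ^ 2) * rexp (-x ^ 2 / 2))
    (fun x _ => hasDerivAt_F x) hint.integrableOn tendsto_F_top
  simpa using hF

lemma even_integral_eq (g : ℝ → ℝ) (hg : ∀ x, g (-x) = g x) (hint : Integrable g) :
    ∫ x : ℝ, g x = 2 * ∫ x in Set.Ioi (0:ℝ), g x := by
  have hsplit := intervalIntegral.integral_Iic_add_Ioi (μ := volume) (f := g) (b := (0:ℝ))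
    hint.integrableOn hint.integrableOn
  have hneg : ∫ x in Set.Ioi (0:ℝ), g (-x) = ∫ x in Set.Iic (-(0:ℝ)), g x :=
    integral_comp_neg_Ioi 0 g
  simp only [neg_zero] at hneg
  have heq : ∫ x in Set.Iic (0:ℝ), g x = ∫ x in Set.Ioi (0:ℝ), g x := by
    rw [← hneg]
    exact setIntegral_congr_fun measurableSet_Ioi (fun x _ => (hg x))
  rw [← hsplit, heq]; ring

lemma integral_sq_gexp : ∫ x : ℝ, x ^ 2 * rexp (-x ^ 2 / 2) = √(2 * π) := by
  have hi1 : IntegrableOn (fun x : ℝ => rexp (-x ^ 2 / 2)) (Set.Ioi 0) :=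
    integrable_gexp.integrableOn
  have hi2 : IntegrableOn (fun x : ℝ => x ^ 2 * rexp (-x ^ 2 / 2)) (Set.Ioi 0) :=
    (integrable_pow_gexp 2).integrableOn
  have hs : (∫ x in Set.Ioi (0:ℝ), (1 - x ^ 2) * rexp (-x ^ 2 / 2))
      = (∫ x in Set.Ioi (0:ℝ), rexp (-x ^ 2 / 2))
        - ∫ x in Set.Ioi (0:ℝ), x ^ 2 * rexp (-x ^ 2 / 2) := by
    rw [← integral_sub hi1 hi2]
    exact setIntegral_congr_fun measurableSet_Ioi (fun x _ => by ring)
  have h1 : ∫ x in Set.Ioi (0:ℝ), x ^ 2 * rexp (-x ^ 2 / 2)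
      = ∫ x in Set.Ioi (0:ℝ), rexp (-x ^ 2 / 2) := by
    have := integral_Ioi_sub
    linarith [hs]
  rw [even_integral_eq _ (fun x => by ring_nf) (integrable_pow_gexp 2), h1,
    ← even_integral_eq _ (fun x => by ring_nf) integrable_gexp, integral_gexp]


lemma gpdf_eq (x : ℝ) : gaussianPDFReal 0 1 x = (√(2 * π))⁻¹ * rexp (-x ^ 2 / 2) := by
  simp [gaussianPDFReal]

lemma gaussianReal_integral_eq (g : ℝ → ℝ) :
    ∫ x, g x ∂(gaussianReal 0 1) = ∫ x, gaussianPDFReal 0 1 x * g x := by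
  rw [gaussianReal_of_var_ne_zero 0 one_ne_zero, gaussianPDF_def]
  have h : (fun x => ENNReal.ofReal (gaussianPDFReal 0 1 x))
      = fun x => ((gaussianPDFReal 0 1 x).toNNReal : ℝ≥0∞) := rfl
  rw [h, integral_withDensity_eq_integral_smul ((measurable_gaussianPDFReal 0 1).real_toNNReal) g]
  congr 1; ext x
  simp [NNReal.smul_def, Real.coe_toNNReal _ (gaussianPDFReal_nonneg 0 1 x)]

lemma gaussianReal_integrable_iff (g : ℝ → ℝ) :
    Integrable g (gaussianReal 0 1)
      ↔ Integrable (fun x => gaussianPDFReal 0 1 x * g x) volume := by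
  rw [gaussianReal_of_var_ne_zero 0 one_ne_zero, gaussianPDF_def]
  have h : (fun x => ENNReal.ofReal (gaussianPDFReal 0 1 x))
      = fun x => ((gaussianPDFReal 0 1 x).toNNReal : ℝ≥0∞) := rfl
  rw [h, integrable_withDensity_iff_integrable_smul
    ((measurable_gaussianPDFReal 0 1).real_toNNReal)]
  constructor <;> intro hi <;> refine hi.congr (ae_of_all _ fun x => ?_) <;>
    simp [NNReal.smul_def, Real.coe_toNNReal _ (gaussianPDFReal_nonneg 0 1 x)]

lemma sqrt_two_pi_pos : (0:ℝ) < √(2 * π) := Real.sqrt_pos.2 (by positivity)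

lemma integrable_pow_gauss (k : ℕ) :
    Integrable (fun x : ℝ => x ^ k) (gaussianReal 0 1) := by
  rw [gaussianReal_integrable_iff]
  refine ((integrable_pow_gexp k).const_mul ((√(2 * π))⁻¹)).congr (ae_of_all _ fun x => ?_)
  simp only [gpdf_eq]; ring

lemma integrable_abs_pow_gauss (k : ℕ) :
    Integrable (fun x : ℝ => |x| ^ k) (gaussianReal 0 1) := by
  rw [gaussianReal_integrable_iff]
  refine ((integrable_abs_pow_gexp k).const_mul ((√(2 * π))⁻¹)).congr (ae_of_all _ fun x => ?_)
  simp only [gpdf_eq]; ring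

lemma integral_id_gauss : ∫ x, x ∂(gaussianReal 0 1) = 0 := by
  rw [gaussianReal_integral_eq]
  have h : ∀ x : ℝ, gaussianPDFReal 0 1 x * x
      = (√(2 * π))⁻¹ * (x * rexp (-x ^ 2 / 2)) := fun x => by simp only [gpdf_eq]; ring
  simp_rw [h]
  rw [integral_const_mul, integral_mul_gexp_eq_zero, mul_zero]

lemma integral_sq_gauss : ∫ x, x ^ 2 ∂(gaussianReal 0 1) = 1 := by
  rw [gaussianReal_integral_eq]
  have h : ∀ x : ℝ, gaussianPDFReal 0 1 x * x ^ 2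
      = (√(2 * π))⁻¹ * (x ^ 2 * rexp (-x ^ 2 / 2)) := fun x => by simp only [gpdf_eq]; ring
  simp_rw [h]
  rw [integral_const_mul, integral_sq_gexp, inv_mul_cancel₀ (ne_of_gt sqrt_two_pi_pos)]


/-- Standard Gaussian measure `N(0, I_n)` on `EuclideanSpace ℝ (Fin n)`. -/
def stdGaussian (n : ℕ) : Measure (EuclideanSpace ℝ (Fin n)) :=
  (Measure.pi fun _ : Fin n => gaussianReal 0 1).map
    (MeasurableEquiv.toLp 2 (Fin n → ℝ))

/-- Gaussian smoothing `f_μ(x) = E_u[f(x + μ u)]`, `u ~ N(0, I_n)`. -/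
def gsmooth {n : ℕ} (μ : ℝ) (f : EuclideanSpace ℝ (Fin n) → ℝ)
    (x : EuclideanSpace ℝ (Fin n)) : ℝ :=
  ∫ u, f (x + μ • u) ∂(stdGaussian n)

lemma pi_map_eval (n : ℕ) (i : Fin n) :
    (Measure.pi fun _ : Fin n => gaussianReal 0 1).map (Function.eval i)
      = gaussianReal 0 1 := by
  ext s hs
  rw [Measure.map_apply (measurable_pi_apply i) hs]
  have hpre : Function.eval i ⁻¹' s
      = Set.pi Set.univ (Function.update (fun _ : Fin n => (Set.univ : Set ℝ)) i s) := by
    ext y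
    simp only [Set.mem_preimage, Set.mem_univ_pi, Function.eval]
    constructor
    · intro hy j
      rcases eq_or_ne j i with rfl | hj
      · simpa using hy
      · simp [Function.update_of_ne hj]
    · intro hy
      simpa using hy i
  rw [hpre, Measure.pi_pi]
  rw [Fintype.prod_eq_single i (fun j hj => by simp [Function.update_of_ne hj])]
  simp

instance stdGaussian_prob (n : ℕ) : IsProbabilityMeasure (stdGaussian n) :=
  Measure.isProbabilityMeasure_map
    (MeasurableEquiv.toLp 2 (Fin n → ℝ)).measurable.aemeasurable

lemma integral_stdGaussian {n : ℕ} {F : Type*} [NormedAddCommGroup F] [NormedSpace ℝ F]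
    (g : EuclideanSpace ℝ (Fin n) → F) :
    ∫ u, g u ∂(stdGaussian n)
      = ∫ y, g (MeasurableEquiv.toLp 2 (Fin n → ℝ) y)
          ∂(Measure.pi fun _ : Fin n => gaussianReal 0 1) :=
  MeasureTheory.integral_map_equiv _ _

lemma integral_coord (n : ℕ) (i : Fin n) (h : ℝ → ℝ)
    (hm : AEStronglyMeasurable h (gaussianReal 0 1)) :
    ∫ u, h (u i) ∂(stdGaussian n) = ∫ t, h t ∂(gaussianReal 0 1) := by
  rw [integral_stdGaussian]
  have hco : ∀ y : Fin n → ℝ,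
      (MeasurableEquiv.toLp 2 (Fin n → ℝ) y) i = y i := fun _ => rfl
  simp_rw [hco]
  have hmap := integral_map (μ := Measure.pi fun _ : Fin n => gaussianReal 0 1)
    (φ := Function.eval i) (measurable_pi_apply i).aemeasurable
    (f := h) (by rwa [pi_map_eval])
  rw [← hmap, pi_map_eval]

lemma integrable_coord (n : ℕ) (i : Fin n) (h : ℝ → ℝ)
    (hi : Integrable h (gaussianReal 0 1)) :
    Integrable (fun u : EuclideanSpace ℝ (Fin n) => h (u i)) (stdGaussian n) := by
  unfold _root_.stdGaussian
  rw [integrable_map_equiv]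
  have hi' : Integrable h
      ((Measure.pi fun _ : Fin n => gaussianReal 0 1).map (Function.eval i)) := by
    rwa [pi_map_eval]
  have := (integrable_map_measure hi'.aestronglyMeasurable
    (measurable_pi_apply i).aemeasurable).mp hi'
  exact this

lemma normsq_eq {n : ℕ} (u : EuclideanSpace ℝ (Fin n)) :
    ‖u‖ ^ 2 = ∑ i, (u i) ^ 2 := by
  rw [EuclideanSpace.norm_eq, Real.sq_sqrt (by positivity)]
  simp [sq_abs]

lemma integrable_normsq {n : ℕ} :
    Integrable (fun u : EuclideanSpace ℝ (Fin n) => ‖u‖ ^ 2) (stdGaussian n) := by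
  have h := integrable_finset_sum (μ := stdGaussian n) Finset.univ
    (f := fun (i : Fin n) (u : EuclideanSpace ℝ (Fin n)) => (u i) ^ 2)
    (fun i _ => integrable_coord n i (fun t => t ^ 2) (integrable_pow_gauss 2))
  refine h.congr (ae_of_all _ fun u => ?_)
  simpa using (normsq_eq u).symm

lemma integral_normsq {n : ℕ} :
    ∫ u, ‖u‖ ^ 2 ∂(stdGaussian n) = (n : ℝ) := by
  simp_rw [normsq_eq]
  rw [integral_finset_sum _ (fun i _ =>
    integrable_coord n i (fun t => t ^ 2) (integrable_pow_gauss 2))]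
  have : ∀ i : Fin n, ∫ u, (u i) ^ 2 ∂(stdGaussian n) = 1 := fun i => by
    rw [integral_coord n i (fun t => t ^ 2)
      (integrable_pow_gauss 2).aestronglyMeasurable, integral_sq_gauss]
  simp [this]

lemma integrable_norm {n : ℕ} :
    Integrable (fun u : EuclideanSpace ℝ (Fin n) => ‖u‖) (stdGaussian n) := by
  refine Integrable.mono' ((integrable_const (1:ℝ)).add integrable_normsq)
    continuous_norm.aestronglyMeasurable (ae_of_all _ fun u => ?_)
  rw [Real.norm_eq_abs, abs_of_nonneg (norm_nonneg u)]
  simp only [Pi.add_apply]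
  nlinarith [norm_nonneg u, sq_nonneg (‖u‖ - 1)]

lemma integral_norm_le_sqrt {n : ℕ} :
    ∫ u, ‖u‖ ∂(stdGaussian n) ≤ Real.sqrt n := by
  have hX : MemLp (fun u : EuclideanSpace ℝ (Fin n) => ‖u‖) 2 (stdGaussian n) := by
    refine (memLp_two_iff_integrable_sq continuous_norm.aestronglyMeasurable).2 ?_
    exact integrable_normsq
  have hv := variance_nonneg (fun u : EuclideanSpace ℝ (Fin n) => ‖u‖) (stdGaussian n)
  rw [variance_eq_sub hX] at hv
  have h2 : (∫ u, ‖u‖ ∂(stdGaussian n)) ^ 2 ≤ (n : ℝ) := by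
    have hpow : (∫ u, (fun v : EuclideanSpace ℝ (Fin n) => ‖v‖) u ^ 2 ∂(stdGaussian n))
        = (n : ℝ) := by simpa using integral_normsq (n := n)
    simp only [Pi.pow_apply] at hv
    nlinarith [hv]
  calc ∫ u, ‖u‖ ∂(stdGaussian n)
      = √((∫ u, ‖u‖ ∂(stdGaussian n)) ^ 2) :=
        (Real.sqrt_sq (integral_nonneg fun u => norm_nonneg u)).symm
    _ ≤ √(n : ℝ) := Real.sqrt_le_sqrt h2

lemma integral_inner_zero {n : ℕ} (c : EuclideanSpace ℝ (Fin n)) :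
    ∫ u, ⟪c, u⟫ ∂(stdGaussian n) = 0 := by
  have hin : ∀ u : EuclideanSpace ℝ (Fin n), ⟪c, u⟫ = ∑ i, c i * u i := fun u => by
    simp [PiLp.inner_apply, RCLike.inner_apply, conj_trivial, mul_comm]
  simp_rw [hin]
  have hid : Integrable (fun t : ℝ => t) (gaussianReal 0 1) := by
    simpa using integrable_pow_gauss 1
  rw [integral_finset_sum _ (fun i _ =>
    (integrable_coord n i (fun t => t) hid).const_mul (c i))]
  have : ∀ i : Fin n, ∫ u, c i * u i ∂(stdGaussian n) = 0 := fun i => by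
    rw [integral_const_mul, integral_coord n i (fun t => t) hid.aestronglyMeasurable,
      integral_id_gauss, mul_zero]
  simp [this]


lemma fderiv_apply_eq_inner {n : ℕ} (f : EuclideanSpace ℝ (Fin n) → ℝ)
    (y v : EuclideanSpace ℝ (Fin n)) :
    fderiv ℝ f y v = ⟪gradient f y, v⟫ := by
  rw [gradient, InnerProductSpace.toDual_symm_apply]

lemma toDual_gradient' {n : ℕ} (f : EuclideanSpace ℝ (Fin n) → ℝ)
    (y : EuclideanSpace ℝ (Fin n)) :
    InnerProductSpace.toDual ℝ (EuclideanSpace ℝ (Fin n)) (gradient f y) = fderiv ℝ f y := by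
  rw [gradient]
  exact (InnerProductSpace.toDual ℝ _).apply_symm_apply _

lemma grad_norm_diff {n : ℕ} {f : EuclideanSpace ℝ (Fin n) → ℝ} {Lf : ℝ}
    (hLf : 0 ≤ Lf) (hlip : LipschitzWith Lf.toNNReal (gradient f))
    (a b : EuclideanSpace ℝ (Fin n)) :
    ‖gradient f a - gradient f b‖ ≤ Lf * ‖a - b‖ := by
  have h := hlip.dist_le_mul a b
  rwa [dist_eq_norm, dist_eq_norm, Real.coe_toNNReal _ hLf] at h

lemma taylor_bound {n : ℕ} {f : EuclideanSpace ℝ (Fin n) → ℝ} {Lf : ℝ}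
    (hdiff : Differentiable ℝ f) (hLf : 0 ≤ Lf)
    (hlip : LipschitzWith Lf.toNNReal (gradient f)) (x y : EuclideanSpace ℝ (Fin n)) :
    |f y - f x - ⟪gradient f x, y - x⟫| ≤ Lf / 2 * ‖y - x‖ ^ 2 := by
  set d := y - x with hd
  have hline : ∀ t : ℝ, HasDerivAt (fun t : ℝ => x + t • d) d t := fun t => by
    simpa using ((hasDerivAt_id t).smul_const d).const_add x
  have hphi : ∀ t : ℝ, HasDerivAt (fun t : ℝ => f (x + t • d))
      (⟪gradient f (x + t • d), d⟫) t := fun t => by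
    have h1 := ((hdiff (x + t • d)).hasFDerivAt).comp_hasDerivAt t (hline t)
    rw [fderiv_apply_eq_inner f] at h1; exact h1
  have hpsi : ∀ t : ℝ, HasDerivAt
      (fun t : ℝ => f (x + t • d) - t * ⟪gradient f x, d⟫)
      (⟪gradient f (x + t • d), d⟫ - ⟪gradient f x, d⟫) t := fun t => by
    have h2 : HasDerivAt (fun t : ℝ => t * ⟪gradient f x, d⟫) ⟪gradient f x, d⟫ t := by
      simpa using (hasDerivAt_id t).mul_const ⟪gradient f x, d⟫
    exact (hphi t).sub h2
  have hgcont : Continuous (gradient f) := hlip.continuous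
  have hcont : Continuous fun t : ℝ =>
      ⟪gradient f (x + t • d), d⟫ - ⟪gradient f x, d⟫ := by
    refine Continuous.sub ?_ continuous_const
    exact Continuous.inner (hgcont.comp (by continuity)) continuous_const
  have hftc := intervalIntegral.integral_eq_sub_of_hasDerivAt (a := (0:ℝ)) (b := 1)
    (fun t _ => hpsi t) (hcont.intervalIntegrable 0 1)
  have heval : f y - f x - ⟪gradient f x, d⟫
      = ∫ t in (0:ℝ)..1, (⟪gradient f (x + t • d), d⟫ - ⟪gradient f x, d⟫) := by
    rw [hftc]
    have h1 : x + (1:ℝ) • d = y := by rw [one_smul, hd]; abel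
    have h0 : x + (0:ℝ) • d = x := by rw [zero_smul, add_zero]
    rw [h1, h0]; ring
  rw [heval]
  have habs := intervalIntegral.abs_integral_le_integral_abs (a := (0:ℝ)) (b := 1)
    (μ := volume) (f := fun t => ⟪gradient f (x + t • d), d⟫ - ⟪gradient f x, d⟫) (by norm_num)
  have hmono : (∫ t in (0:ℝ)..1, |⟪gradient f (x + t • d), d⟫ - ⟪gradient f x, d⟫|)
      ≤ ∫ t in (0:ℝ)..1, t * (Lf * ‖d‖ ^ 2) := by
    refine intervalIntegral.integral_mono_on (by norm_num)
      (hcont.abs.intervalIntegrable 0 1) ((continuous_id.mul continuous_const).intervalIntegrable 0 1)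
      (fun t ht => ?_)
    have h1 : ⟪gradient f (x + t • d), d⟫ - ⟪gradient f x, d⟫
        = ⟪gradient f (x + t • d) - gradient f x, d⟫ := by
      rw [inner_sub_left]
    rw [h1]
    calc |⟪gradient f (x + t • d) - gradient f x, d⟫|
        ≤ ‖gradient f (x + t • d) - gradient f x‖ * ‖d‖ := abs_real_inner_le_norm _ _
      _ ≤ (Lf * ‖(x + t • d) - x‖) * ‖d‖ := by
          have := grad_norm_diff hLf hlip (x + t • d) x
          exact mul_le_mul_of_nonneg_right this (norm_nonneg d)
      _ = t * (Lf * ‖d‖ ^ 2) := by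
          rw [add_sub_cancel_left, norm_smul, Real.norm_eq_abs, abs_of_nonneg ht.1]
          ring
  have hval : (∫ t in (0:ℝ)..1, t * (Lf * ‖d‖ ^ 2)) = Lf / 2 * ‖d‖ ^ 2 := by
    rw [intervalIntegral.integral_mul_const, integral_id]
    ring
  calc |∫ t in (0:ℝ)..1, (⟪gradient f (x + t • d), d⟫ - ⟪gradient f x, d⟫)|
      ≤ ∫ t in (0:ℝ)..1, |⟪gradient f (x + t • d), d⟫ - ⟪gradient f x, d⟫| := habs
    _ ≤ ∫ t in (0:ℝ)..1, t * (Lf * ‖d‖ ^ 2) := hmono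
    _ = Lf / 2 * ‖d‖ ^ 2 := hval


section main

variable {n : ℕ} {f : EuclideanSpace ℝ (Fin n) → ℝ} {Lf μ : ℝ}

lemma cont_aff (x : EuclideanSpace ℝ (Fin n)) (μ : ℝ) :
    Continuous (fun u : EuclideanSpace ℝ (Fin n) => x + μ • u) :=
  continuous_const.add (continuous_id.const_smul μ)

lemma norm_fderiv_eq (f : EuclideanSpace ℝ (Fin n) → ℝ) (y : EuclideanSpace ℝ (Fin n)) :
    ‖fderiv ℝ f y‖ = ‖gradient f y‖ := by
  rw [← toDual_gradient]
  exact LinearIsometryEquiv.norm_map _ _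

lemma integrable_inner_smul (c : EuclideanSpace ℝ (Fin n)) :
    Integrable (fun u : EuclideanSpace ℝ (Fin n) => ⟪c, u⟫) (stdGaussian n) := by
  have hin : ∀ u : EuclideanSpace ℝ (Fin n), ⟪c, u⟫ = ∑ i, c i * u i := fun u => by
    simp [PiLp.inner_apply, RCLike.inner_apply, conj_trivial, mul_comm]
  have hid : Integrable (fun t : ℝ => t) (gaussianReal 0 1) := by
    simpa using integrable_pow_gauss 1
  have h := integrable_finset_sum (μ := stdGaussian n) Finset.univ
    (f := fun (i : Fin n) (u : EuclideanSpace ℝ (Fin n)) => c i * u i)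
    (fun i _ => (integrable_coord n i (fun t => t) hid).const_mul (c i))
  exact h.congr (ae_of_all _ fun u => (hin u).symm)

variable (hdiff : Differentiable ℝ f) (hLf : 0 ≤ Lf)
  (hlip : LipschitzWith Lf.toNNReal (gradient f))

include hdiff hLf hlip in
lemma integrable_f_comp (x : EuclideanSpace ℝ (Fin n)) :
    Integrable (fun u => f (x + μ • u)) (stdGaussian n) := by
  refine Integrable.mono'
    (g := fun u => (|f x| + ‖gradient f x‖ * |μ| * ‖u‖) + (Lf / 2 * μ ^ 2) * ‖u‖ ^ 2)
    (((integrable_const _).add (integrable_norm.const_mul _)).add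
      (integrable_normsq.const_mul _))
    ((hdiff.continuous.comp (cont_aff x μ)).aestronglyMeasurable)
    (ae_of_all _ fun u => ?_)
  have ht := taylor_bound hdiff hLf hlip x (x + μ • u)
  rw [add_sub_cancel_left] at ht
  have hnorm : ‖μ • u‖ = |μ| * ‖u‖ := by rw [norm_smul, Real.norm_eq_abs]
  have hinner : |⟪gradient f x, μ • u⟫| ≤ ‖gradient f x‖ * (|μ| * ‖u‖) := by
    calc |⟪gradient f x, μ • u⟫| ≤ ‖gradient f x‖ * ‖μ • u‖ := abs_real_inner_le_norm _ _
      _ = ‖gradient f x‖ * (|μ| * ‖u‖) := by rw [hnorm]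
  have hsq : ‖μ • u‖ ^ 2 = μ ^ 2 * ‖u‖ ^ 2 := by rw [hnorm]; rw [mul_pow, sq_abs]
  rw [Real.norm_eq_abs]
  have := abs_sub_abs_le_abs_sub (f (x + μ • u)) (f x + ⟪gradient f x, μ • u⟫)
  have habs : |f (x + μ • u)| ≤ |f x + ⟪gradient f x, μ • u⟫|
      + |f (x + μ • u) - f x - ⟪gradient f x, μ • u⟫| := by
    have h3 : f (x + μ • u) = (f x + ⟪gradient f x, μ • u⟫)
        + (f (x + μ • u) - f x - ⟪gradient f x, μ • u⟫) := by ring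
    calc |f (x + μ • u)| = |(f x + ⟪gradient f x, μ • u⟫)
        + (f (x + μ • u) - f x - ⟪gradient f x, μ • u⟫)| := by rw [← h3]
      _ ≤ _ := abs_add_le _ _
  have h4 : |f x + ⟪gradient f x, μ • u⟫| ≤ |f x| + ‖gradient f x‖ * (|μ| * ‖u‖) :=
    le_trans (abs_add_le _ _) (by linarith [hinner])
  have h5 : |f (x + μ • u) - f x - ⟪gradient f x, μ • u⟫| ≤ Lf / 2 * (μ ^ 2 * ‖u‖ ^ 2) := by
    calc |f (x + μ • u) - f x - ⟪gradient f x, μ • u⟫| ≤ Lf / 2 * ‖μ • u‖ ^ 2 := ht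
      _ = Lf / 2 * (μ ^ 2 * ‖u‖ ^ 2) := by rw [hsq]
  calc |f (x + μ • u)| ≤ (|f x| + ‖gradient f x‖ * (|μ| * ‖u‖)) + Lf / 2 * (μ ^ 2 * ‖u‖ ^ 2) := by
        linarith
    _ = (|f x| + ‖gradient f x‖ * |μ| * ‖u‖) + (Lf / 2 * μ ^ 2) * ‖u‖ ^ 2 := by ring

include hLf hlip in
lemma integrable_grad_comp (x : EuclideanSpace ℝ (Fin n)) :
    Integrable (fun u => gradient f (x + μ • u)) (stdGaussian n) := by
  refine Integrable.mono'
    (g := fun u => ‖gradient f x‖ + (Lf * |μ|) * ‖u‖)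
    ((integrable_const _).add (integrable_norm.const_mul _))
    ((hlip.continuous.comp (cont_aff x μ)).aestronglyMeasurable)
    (ae_of_all _ fun u => ?_)
  have h1 := grad_norm_diff hLf hlip (x + μ • u) x
  rw [add_sub_cancel_left] at h1
  have h2 : ‖gradient f (x + μ • u)‖
      ≤ ‖gradient f x‖ + ‖gradient f (x + μ • u) - gradient f x‖ := by
    calc ‖gradient f (x + μ • u)‖
        = ‖gradient f x + (gradient f (x + μ • u) - gradient f x)‖ := by congr 1; abel
      _ ≤ _ := norm_add_le _ _
  have h3 : ‖μ • u‖ = |μ| * ‖u‖ := by rw [norm_smul, Real.norm_eq_abs]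
  calc ‖gradient f (x + μ • u)‖
      ≤ ‖gradient f x‖ + Lf * (|μ| * ‖u‖) := by rw [h3] at h1; linarith
    _ = ‖gradient f x‖ + (Lf * |μ|) * ‖u‖ := by ring

include hLf hlip in
lemma integrable_fderiv_comp (x : EuclideanSpace ℝ (Fin n)) :
    Integrable (fun u => fderiv ℝ f (x + μ • u)) (stdGaussian n) := by
  have h : (fun u : EuclideanSpace ℝ (Fin n) => fderiv ℝ f (x + μ • u))
      = fun u => (InnerProductSpace.toDual ℝ (EuclideanSpace ℝ (Fin n))).toContinuousLinearEquiv.toContinuousLinearMap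
          (gradient f (x + μ • u)) := by
    ext u v
    rw [← toDual_gradient' f (x + μ • u)]
    rfl
  rw [h]
  exact ContinuousLinearMap.integrable_comp _ (integrable_grad_comp hLf hlip x)

include hdiff hLf hlip in
lemma hasGradientAt_gsmooth (x₀ : EuclideanSpace ℝ (Fin n)) :
    HasGradientAt (gsmooth μ f)
      (∫ u, gradient f (x₀ + μ • u) ∂(stdGaussian n)) x₀ := by
  have key : HasFDerivAt (fun x => ∫ u, f (x + μ • u) ∂(stdGaussian n))
      (∫ u, fderiv ℝ f (x₀ + μ • u) ∂(stdGaussian n)) x₀ := by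
    apply hasFDerivAt_integral_of_dominated_of_fderiv_le (s := Metric.ball x₀ 1) (Metric.ball_mem_nhds x₀ one_pos)
      (F := fun x (u : EuclideanSpace ℝ (Fin n)) => f (x + μ • u))
      (F' := fun x (u : EuclideanSpace ℝ (Fin n)) => fderiv ℝ f (x + μ • u))
      (bound := fun u => (‖gradient f x₀‖ + Lf) + (Lf * |μ|) * ‖u‖)
    · exact Filter.Eventually.of_forall fun x =>
        ((hdiff.continuous.comp (cont_aff x μ)).aestronglyMeasurable)
    · exact integrable_f_comp hdiff hLf hlip x₀
    · have : Continuous (fun u : EuclideanSpace ℝ (Fin n) => fderiv ℝ f (x₀ + μ • u)) := by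
        have h : (fun u : EuclideanSpace ℝ (Fin n) => fderiv ℝ f (x₀ + μ • u))
            = fun u => (InnerProductSpace.toDual ℝ (EuclideanSpace ℝ (Fin n)))
                (gradient f (x₀ + μ • u)) := by
          ext u v
          rw [← toDual_gradient' f (x₀ + μ • u)]
        rw [h]
        exact (InnerProductSpace.toDual ℝ _).continuous.comp
          (hlip.continuous.comp (cont_aff x₀ μ))
      exact this.aestronglyMeasurable
    · refine ae_of_all _ fun u x hx => ?_
      rw [norm_fderiv_eq]
      have h1 := grad_norm_diff hLf hlip (x + μ • u) x₀
      have h2 : ‖gradient f (x + μ • u)‖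
          ≤ ‖gradient f x₀‖ + ‖gradient f (x + μ • u) - gradient f x₀‖ := by
        calc ‖gradient f (x + μ • u)‖
            = ‖gradient f x₀ + (gradient f (x + μ • u) - gradient f x₀)‖ := by congr 1; abel
          _ ≤ _ := norm_add_le _ _
      have h3 : ‖x + μ • u - x₀‖ ≤ ‖x - x₀‖ + |μ| * ‖u‖ := by
        calc ‖x + μ • u - x₀‖ = ‖(x - x₀) + μ • u‖ := by congr 1; abel
          _ ≤ ‖x - x₀‖ + ‖μ • u‖ := norm_add_le _ _
          _ = ‖x - x₀‖ + |μ| * ‖u‖ := by rw [norm_smul, Real.norm_eq_abs]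
      have hball : ‖x - x₀‖ ≤ 1 := by
        have := Metric.mem_ball.mp hx
        rw [dist_eq_norm] at this
        linarith
      have hnorm : 0 ≤ ‖u‖ := norm_nonneg u
      nlinarith [mul_le_mul_of_nonneg_left h3 hLf]
    · exact (integrable_const _).add (integrable_norm.const_mul _)
    · refine ae_of_all _ fun u x hx => ?_
      have := (hdiff (x + μ • u)).hasFDerivAt.comp x ((hasFDerivAt_id x).add_const (μ • u))
      exact this
  have heq : InnerProductSpace.toDual ℝ (EuclideanSpace ℝ (Fin n))
      (∫ u, gradient f (x₀ + μ • u) ∂(stdGaussian n))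
      = ∫ u, fderiv ℝ f (x₀ + μ • u) ∂(stdGaussian n) := by
    apply ContinuousLinearMap.ext
    intro v
    rw [ContinuousLinearMap.integral_apply (integrable_fderiv_comp hLf hlip x₀)]
    rw [InnerProductSpace.toDual_apply_apply, real_inner_comm,
      ← integral_inner (integrable_grad_comp hLf hlip x₀) v]
    congr 1
    ext u
    rw [fderiv_apply_eq_inner, real_inner_comm]
  rw [hasGradientAt_iff_hasFDerivAt, heq]
  exact key

include hdiff hLf hlip in
lemma gradient_gsmooth_eq (x : EuclideanSpace ℝ (Fin n)) :
    gradient (gsmooth μ f) x = ∫ u, gradient f (x + μ • u) ∂(stdGaussian n) :=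
  (hasGradientAt_gsmooth hdiff hLf hlip x).gradient

end main


/-- Nesterov's smoothing lemma, parts (a)–(b).
If `f` has an `L_f`-Lipschitz gradient and `μ > 0`, then the Gaussian smoothing `f_μ`
also has an `L_f`-Lipschitz gradient, `|f_μ(x) − f(x)| ≤ (μ²/2)·L_f·n` and
`‖∇f_μ(x) − ∇f(x)‖ ≤ (μ/2)·L_f·(n+3)^{3/2}` for every `x`. -/
theorem statement0 {n : ℕ} (f : EuclideanSpace ℝ (Fin n) → ℝ) (Lf μ : ℝ)
    (hLf : 0 ≤ Lf) (hμ : 0 < μ)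
    (hdiff : Differentiable ℝ f)
    (hlip : LipschitzWith Lf.toNNReal (gradient f)) :
    Differentiable ℝ (gsmooth μ f) ∧
    LipschitzWith Lf.toNNReal (gradient (gsmooth μ f)) ∧
    (∀ x, |gsmooth μ f x - f x| ≤ μ ^ 2 / 2 * Lf * n) ∧
    (∀ x, ‖gradient (gsmooth μ f) x - gradient f x‖ ≤
      μ / 2 * Lf * ((n : ℝ) + 3) ^ ((3 : ℝ) / 2)) := by
  have hgrad : ∀ x, gradient (gsmooth μ f) x
      = ∫ u, gradient f (x + μ • u) ∂(stdGaussian n) :=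
    fun x => gradient_gsmooth_eq hdiff hLf hlip x
  refine ⟨?_, ?_, ?_, ?_⟩
  · -- differentiability
    intro x
    exact (hasGradientAt_gsmooth hdiff hLf hlip x).differentiableAt
  · -- Lipschitz gradient
    refine LipschitzWith.of_dist_le_mul fun a b => ?_
    rw [dist_eq_norm, dist_eq_norm, Real.coe_toNNReal _ hLf, hgrad a, hgrad b,
      ← integral_sub (integrable_grad_comp hLf hlip a) (integrable_grad_comp hLf hlip b)]
    calc ‖∫ u, (gradient f (a + μ • u) - gradient f (b + μ • u)) ∂(stdGaussian n)‖
        ≤ ∫ u, ‖gradient f (a + μ • u) - gradient f (b + μ • u)‖ ∂(stdGaussian n) :=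
          norm_integral_le_integral_norm _
      _ ≤ ∫ _u, Lf * ‖a - b‖ ∂(stdGaussian n) := by
          refine integral_mono
            (((integrable_grad_comp hLf hlip a).sub
              (integrable_grad_comp hLf hlip b)).norm)
            (integrable_const _) fun u => ?_
          have h := grad_norm_diff hLf hlip (a + μ • u) (b + μ • u)
          have he : (a + μ • u) - (b + μ • u) = a - b := by abel
          rwa [he] at h
      _ = Lf * ‖a - b‖ := by rw [integral_const]; simp
  · -- value approximation
    intro x
    have hint1 := integrable_f_comp hdiff hLf hlip (μ := μ) x
    have hmul : ∀ u : EuclideanSpace ℝ (Fin n),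
        ⟪gradient f x, μ • u⟫ = μ * ⟪gradient f x, u⟫ := fun u =>
      real_inner_smul_right _ _ _
    have hintInner : Integrable
        (fun u : EuclideanSpace ℝ (Fin n) => ⟪gradient f x, μ • u⟫)
        (stdGaussian n) := by
      refine ((integrable_inner_smul (gradient f x)).const_mul μ).congr
        (ae_of_all _ fun u => ?_)
      simpa using (hmul u).symm
    have hint2 : Integrable
        (fun u : EuclideanSpace ℝ (Fin n) => f x + ⟪gradient f x, μ • u⟫)
        (stdGaussian n) := (integrable_const (f x)).add hintInner
    have hz : ∫ u, ⟪gradient f x, μ • u⟫ ∂(stdGaussian n) = 0 := by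
      simp_rw [hmul]
      rw [integral_const_mul, integral_inner_zero, mul_zero]
    have h0 : ∫ u, (f x + ⟪gradient f x, μ • u⟫) ∂(stdGaussian n) = f x := by
      rw [integral_add (integrable_const _) hintInner, hz, integral_const]
      simp
    have hrepr : gsmooth μ f x - f x
        = ∫ u, (f (x + μ • u) - f x - ⟪gradient f x, μ • u⟫) ∂(stdGaussian n) := by
      have hdef : gsmooth μ f x = ∫ u, f (x + μ • u) ∂(stdGaussian n) := rfl
      have hsub := integral_sub hint1 hint2
      rw [h0] at hsub
      rw [hdef, ← hsub]
      congr 1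
      ext u
      ring
    rw [hrepr]
    have hintψ : Integrable
        (fun u : EuclideanSpace ℝ (Fin n) =>
          f (x + μ • u) - f x - ⟪gradient f x, μ • u⟫) (stdGaussian n) := by
      refine (hint1.sub hint2).congr (ae_of_all _ fun u => ?_)
      simp only [Pi.sub_apply]
      ring
    calc |∫ u, (f (x + μ • u) - f x - ⟪gradient f x, μ • u⟫) ∂(stdGaussian n)|
        ≤ ∫ u, |f (x + μ • u) - f x - ⟪gradient f x, μ • u⟫| ∂(stdGaussian n) := by
          simpa [Real.norm_eq_abs] using norm_integral_le_integral_norm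
            (μ := stdGaussian n)
            (fun u => f (x + μ • u) - f x - ⟪gradient f x, μ • u⟫)
      _ ≤ ∫ u, (μ ^ 2 / 2 * Lf) * ‖u‖ ^ 2 ∂(stdGaussian n) := by
          refine integral_mono hintψ.abs (integrable_normsq.const_mul _) fun u => ?_
          have ht := taylor_bound hdiff hLf hlip x (x + μ • u)
          rw [add_sub_cancel_left] at ht
          have hsq : ‖μ • u‖ ^ 2 = μ ^ 2 * ‖u‖ ^ 2 := by
            rw [norm_smul, Real.norm_eq_abs, mul_pow, sq_abs]
          calc |f (x + μ • u) - f x - ⟪gradient f x, μ • u⟫|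
              ≤ Lf / 2 * ‖μ • u‖ ^ 2 := ht
            _ = (μ ^ 2 / 2 * Lf) * ‖u‖ ^ 2 := by rw [hsq]; ring
      _ = μ ^ 2 / 2 * Lf * n := by
          rw [integral_const_mul, integral_normsq]
  · -- gradient approximation
    intro x
    rw [hgrad x]
    have hsub : (∫ u, gradient f (x + μ • u) ∂(stdGaussian n)) - gradient f x
        = ∫ u, (gradient f (x + μ • u) - gradient f x) ∂(stdGaussian n) := by
      rw [integral_sub (integrable_grad_comp hLf hlip x) (integrable_const _),
        integral_const]
      simp
    rw [hsub]
    have hbound : ∀ u : EuclideanSpace ℝ (Fin n),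
        ‖gradient f (x + μ • u) - gradient f x‖ ≤ (Lf * μ) * ‖u‖ := fun u => by
      have h := grad_norm_diff hLf hlip (x + μ • u) x
      rw [add_sub_cancel_left, norm_smul, Real.norm_eq_abs, abs_of_pos hμ] at h
      calc ‖gradient f (x + μ • u) - gradient f x‖ ≤ Lf * (μ * ‖u‖) := h
        _ = (Lf * μ) * ‖u‖ := by ring
    have hn : (0:ℝ) ≤ n := Nat.cast_nonneg n
    have h1 : Real.sqrt (n:ℝ) ≤ ((n:ℝ) + 3) ^ ((1:ℝ)/2) := by
      rw [Real.sqrt_eq_rpow]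
      exact Real.rpow_le_rpow hn (by linarith) (by norm_num)
    have h2 : ((n:ℝ) + 3) ^ ((3:ℝ)/2) = ((n:ℝ) + 3) ^ ((1:ℝ)/2) * ((n:ℝ) + 3) := by
      rw [show (3:ℝ)/2 = 1/2 + 1 by norm_num, Real.rpow_add (by linarith),
        Real.rpow_one]
    have h3 : (0:ℝ) ≤ ((n:ℝ) + 3) ^ ((1:ℝ)/2) := Real.rpow_nonneg (by linarith) _
    calc ‖∫ u, (gradient f (x + μ • u) - gradient f x) ∂(stdGaussian n)‖
        ≤ ∫ u, ‖gradient f (x + μ • u) - gradient f x‖ ∂(stdGaussian n) :=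
          norm_integral_le_integral_norm _
      _ ≤ ∫ u, (Lf * μ) * ‖u‖ ∂(stdGaussian n) :=
          integral_mono
            (((integrable_grad_comp hLf hlip x).sub (integrable_const _)).norm)
            (integrable_norm.const_mul _) hbound
      _ = (Lf * μ) * ∫ u, ‖u‖ ∂(stdGaussian n) := integral_const_mul _ _
      _ ≤ (Lf * μ) * Real.sqrt n :=
          mul_le_mul_of_nonneg_left integral_norm_le_sqrt
            (mul_nonneg hLf hμ.le)
      _ ≤ μ / 2 * Lf * ((n : ℝ) + 3) ^ ((3 : ℝ) / 2) := by
          rw [h2]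
          have hA := mul_le_mul_of_nonneg_left h1 (mul_nonneg hLf hμ.le)
          have hAB : (Lf * μ) * (((n:ℝ) + 3) ^ ((1:ℝ)/2) * 2)
              ≤ (Lf * μ) * (((n:ℝ) + 3) ^ ((1:ℝ)/2) * ((n:ℝ) + 3)) := by
            refine mul_le_mul_of_nonneg_left ?_ (mul_nonneg hLf hμ.le)
            exact mul_le_mul_of_nonneg_left (by linarith) h3
          nlinarith [hA, hAB]

end
end

section
/- Let f : ℝ^n → ℝ have L_f-Lipschitz continuous gradient and let μ > 0. Then for every x ∈ ℝ^n, (1/μ²)·E_u[(f(x + μu) − f(x))²·‖u‖²] ≤ (μ²/2)·L_f²·(n+6)³ + 2(n+4)·‖∇f(x)‖², where u is a standard Gaussian random vector in ℝ^n. -/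
open MeasureTheory ProbabilityTheory Real
open scoped BigOperators ENNReal RealInnerProductSpace

noncomputable section

namespace NesterovAux

open Filter
open scoped NNReal

variable {n : ℕ}


lemma gint (k : ℕ) : Integrable (fun x : ℝ => x ^ k * rexp (-x ^ 2 / 2)) := by
    have h := integrable_rpow_mul_exp_neg_mul_sq (b := 1/2) (by norm_num) (s := (k : ℝ))
      (lt_of_lt_of_le (by norm_num) (Nat.cast_nonneg k))
    simp_rw [Real.rpow_natCast] at h
    convert h using 2 with x
    ring_nf

/-- derivative helper -/
lemma dF (k : ℕ) (x : ℝ) :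
      HasDerivAt (fun x : ℝ => -(x ^ (k+1) * rexp (-x ^ 2 / 2)))
        (x ^ (k+2) * rexp (-x ^ 2 / 2) - (k+1) * (x ^ k * rexp (-x ^ 2 / 2))) x := by
    have h1 : HasDerivAt (fun x : ℝ => -x ^ 2 / 2) (-x) x := by
      have := ((hasDerivAt_pow 2 x).neg).div_const 2
      simpa using this.congr_deriv (by ring)
    have h2 : HasDerivAt (fun x : ℝ => rexp (-x ^ 2 / 2)) (-x * rexp (-x ^ 2 / 2)) x := by
      simpa [mul_comm] using h1.exp
    have h3 := (hasDerivAt_pow (k+1) x).mul h2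
    have h4 := h3.neg
    exact h4.congr_deriv (by simp only [Nat.add_sub_cancel]; push_cast; ring)

lemma tendsto_top (m : ℕ) :
      Tendsto (fun x : ℝ => x ^ m * rexp (-x ^ 2 / 2)) atTop (nhds 0) := by
    have h := rpow_mul_exp_neg_mul_sq_isLittleO_exp_neg (b := 1/2) (by norm_num) (m : ℝ)
    have h2 : Tendsto (fun x : ℝ => rexp (-(1/2) * x)) atTop (nhds 0) := by
      apply Real.tendsto_exp_atBot.comp
      apply Tendsto.const_mul_atTop_of_neg (by norm_num) tendsto_id
    have := h.isBigO.trans_tendsto h2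
    simp_rw [Real.rpow_natCast] at this
    convert this using 2 with x
    ring_nf

lemma tendsto_bot (m : ℕ) :
      Tendsto (fun x : ℝ => x ^ m * rexp (-x ^ 2 / 2)) atBot (nhds 0) := by
    have h := (tendsto_top m).const_mul ((-1 : ℝ) ^ m)
    rw [mul_zero] at h
    have h2 := h.comp tendsto_neg_atBot_atTop
    convert h2 using 2 with x
    simp only [Function.comp, neg_neg, neg_sq, even_two, Even.neg_pow]
    rw [← mul_assoc, ← mul_pow]
    norm_num

lemma Jrec (k : ℕ) :
      ∫ x : ℝ, x ^ (k+2) * rexp (-x ^ 2 / 2) = (k+1) * ∫ x : ℝ, x ^ k * rexp (-x ^ 2 / 2) := by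
    have hint : Integrable (fun x : ℝ =>
        x ^ (k+2) * rexp (-x ^ 2 / 2) - (k+1) * (x ^ k * rexp (-x ^ 2 / 2))) :=
      (gint (k+2)).sub ((gint k).const_mul _)
    have h0 : Tendsto (fun x : ℝ => -(x ^ (k+1) * rexp (-x ^ 2 / 2))) atBot (nhds 0) := by
      simpa using (tendsto_bot (k+1)).neg
    have h1 : Tendsto (fun x : ℝ => -(x ^ (k+1) * rexp (-x ^ 2 / 2))) atTop (nhds 0) := by
      simpa using (tendsto_top (k+1)).neg
    have := integral_of_hasDerivAt_of_tendsto (f' := fun x : ℝ =>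
        x ^ (k+2) * rexp (-x ^ 2 / 2) - (k+1) * (x ^ k * rexp (-x ^ 2 / 2))) (dF k) hint h0 h1
    rw [sub_zero] at this
    rw [integral_sub (gint (k+2)) ((gint k).const_mul _), integral_const_mul] at this
    linarith [this]

lemma J0 : ∫ x : ℝ, x ^ 0 * rexp (-x ^ 2 / 2) = √(2 * π) := by
    have := integral_gaussian (1/2)
    simp_rw [pow_zero, one_mul]
    rw [show (2*π) = π / (1/2) by ring]
    rw [← this]
    congr 1 with x
    ring_nf

lemma J1 : ∫ x : ℝ, x ^ 1 * rexp (-x ^ 2 / 2) = 0 := by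
    have h := integral_neg_eq_self (fun x : ℝ => x ^ 1 * rexp (-x ^ 2 / 2)) volume
    have h2 : (fun x : ℝ => (-x) ^ 1 * rexp (-(-x) ^ 2 / 2))
        = fun x : ℝ => -(x ^ 1 * rexp (-x ^ 2 / 2)) := by
      funext x
      rw [neg_sq]
      ring
    rw [h2, integral_neg] at h
    linarith [h]
lemma pdf_eq (x : ℝ) : gaussianPDFReal 0 1 x = (√(2 * π))⁻¹ * rexp (-x ^ 2 / 2) := by
    rw [gaussianPDFReal_def]
    norm_num

lemma gauss_eq_withDensity :
      gaussianReal 0 1 = (volume : Measure ℝ).withDensity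
        (fun x => ((gaussianPDFReal 0 1 x).toNNReal : ℝ≥0∞)) := by
    rw [gaussianReal_of_var_ne_zero 0 one_ne_zero]
    rfl

lemma Mint (k : ℕ) : Integrable (fun x : ℝ => x ^ k) (gaussianReal 0 1) := by
    rw [gauss_eq_withDensity,
      integrable_withDensity_iff_integrable_smul ((measurable_gaussianPDFReal 0 1).real_toNNReal)]
    have : (fun x : ℝ => (gaussianPDFReal 0 1 x).toNNReal • x ^ k)
        = fun x : ℝ => (√(2 * π))⁻¹ * (x ^ k * rexp (-x ^ 2 / 2)) := by
      funext x
      rw [NNReal.smul_def, Real.coe_toNNReal _ (gaussianPDFReal_nonneg 0 1 x), smul_eq_mul,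
        pdf_eq]
      ring
    rw [this]
    exact (gint k).const_mul _

lemma Mval (k : ℕ) : ∫ x, x ^ k ∂(gaussianReal 0 1)
      = (√(2 * π))⁻¹ * ∫ x : ℝ, x ^ k * rexp (-x ^ 2 / 2) := by
    rw [gauss_eq_withDensity, integral_withDensity_eq_integral_smul
      ((measurable_gaussianPDFReal 0 1).real_toNNReal)]
    rw [← integral_const_mul]
    congr 1 with x
    rw [NNReal.smul_def, Real.coe_toNNReal _ (gaussianPDFReal_nonneg 0 1 x), smul_eq_mul, pdf_eq]
    ring

lemma sqrt_two_pi_pos : (0:ℝ) < √(2 * π) := Real.sqrt_pos.mpr (by positivity)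

lemma M0 : ∫ x, x ^ 0 ∂(gaussianReal 0 1) = 1 := by
    rw [Mval, J0]; field_simp
lemma M1 : ∫ x, x ^ 1 ∂(gaussianReal 0 1) = 0 := by rw [Mval, J1]; ring
lemma M2 : ∫ x, x ^ 2 ∂(gaussianReal 0 1) = 1 := by
    rw [Mval, Jrec 0, J0]; push_cast; field_simp; norm_num
lemma M3 : ∫ x, x ^ 3 ∂(gaussianReal 0 1) = 0 := by
    rw [Mval, Jrec 1, J1]; ring
lemma M4 : ∫ x, x ^ 4 ∂(gaussianReal 0 1) = 3 := by
    rw [Mval, Jrec 2, Jrec 0, J0]; push_cast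
    rw [inv_mul_eq_div, div_eq_iff sqrt_two_pi_pos.ne']; ring
lemma M6 : ∫ x, x ^ 6 ∂(gaussianReal 0 1) = 15 := by
    rw [Mval, Jrec 4, Jrec 2, Jrec 0, J0]; push_cast
    rw [inv_mul_eq_div, div_eq_iff sqrt_two_pi_pos.ne']; ring
def gm (k : ℕ) : ℝ := ∫ x, x ^ k ∂(gaussianReal 0 1)

lemma gm0 : gm 0 = 1 := M0
lemma gm1 : gm 1 = 0 := M1
lemma gm2 : gm 2 = 1 := M2
lemma gm3 : gm 3 = 0 := M3
lemma gm4 : gm 4 = 3 := M4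
lemma gm6 : gm 6 = 15 := M6


lemma pi_monomial_int (e : Fin n → ℕ) :
      Integrable (fun y : Fin n → ℝ => ∏ l, y l ^ e l)
        (Measure.pi fun _ : Fin n => gaussianReal 0 1) := by
    letI : MeasureSpace ℝ := ⟨gaussianReal 0 1⟩
    haveI : SigmaFinite (volume : Measure ℝ) := by
      change SigmaFinite (gaussianReal 0 1); infer_instance
    exact Integrable.fintype_prod (f := fun l (x : ℝ) => x ^ e l) (fun l => Mint (e l))

lemma pi_monomial_val (e : Fin n → ℕ) :
      ∫ y : Fin n → ℝ, ∏ l, y l ^ e l ∂(Measure.pi fun _ : Fin n => gaussianReal 0 1)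
        = ∏ l, gm (e l) := by
    letI : MeasureSpace ℝ := ⟨gaussianReal 0 1⟩
    haveI : SigmaFinite (volume : Measure ℝ) := by
      change SigmaFinite (gaussianReal 0 1); infer_instance
    exact integral_fintype_prod_eq_prod (fun l (x : ℝ) => x ^ e l)

lemma prod_pow_ite (y : Fin n → ℝ) (i : Fin n) (p : ℕ) :
      ∏ l, y l ^ (if l = i then p else 0) = y i ^ p := by
    rw [Finset.prod_congr rfl (fun l _ => by split <;> simp_all : ∀ l ∈ Finset.univ,
      y l ^ (if l = i then p else 0) = if l = i then y l ^ p else 1)]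
    simp [Finset.prod_ite_eq']

def e3 (i j k : Fin n) (p q r : ℕ) : Fin n → ℕ :=
    fun l => (if l = i then p else 0) + (if l = j then q else 0) + (if l = k then r else 0)

lemma key3 (y : Fin n → ℝ) (i j k : Fin n) (p q r : ℕ) :
      y i ^ p * y j ^ q * y k ^ r = ∏ l, y l ^ (e3 i j k p q r l) := by
    unfold e3
    simp_rw [pow_add, Finset.prod_mul_distrib, prod_pow_ite]

lemma mono3_int (i j k : Fin n) (p q r : ℕ) :
      Integrable (fun y : Fin n → ℝ => y i ^ p * y j ^ q * y k ^ r)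
        (Measure.pi fun _ : Fin n => gaussianReal 0 1) := by
    simp_rw [key3]
    exact pi_monomial_int _

lemma mono3_val (i j k : Fin n) (p q r : ℕ) :
      ∫ y : Fin n → ℝ, y i ^ p * y j ^ q * y k ^ r ∂(Measure.pi fun _ : Fin n => gaussianReal 0 1)
        = ∏ l, gm (e3 i j k p q r l) := by
    simp_rw [key3]
    exact pi_monomial_val _

lemma prod_gm_single (c : Fin n → ℝ) (i : Fin n) (v : ℝ)
      (h : ∀ l, c l = if l = i then v else 1) : ∏ l, c l = v := by
    rw [Finset.prod_congr rfl (fun l _ => h l)]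
    simp [Finset.prod_ite_eq']

/-- sixth-moment monomial -/
lemma T6 (i j k : Fin n) :
      ∫ y : Fin n → ℝ, y i ^ 2 * y j ^ 2 * y k ^ 2 ∂(Measure.pi fun _ : Fin n => gaussianReal 0 1)
        = 1 + 2 * ((if i = j then (1:ℝ) else 0) + (if j = k then (1:ℝ) else 0)
            + (if i = k then (1:ℝ) else 0))
          + 8 * ((if i = j then (1:ℝ) else 0) * (if j = k then (1:ℝ) else 0)) := by
    rw [mono3_val]
    by_cases hij : i = j
    · by_cases hjk : j = k
      · -- all equal
        have hik : i = k := hij.trans hjk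
        rw [prod_gm_single _ i 15 ?_]
        · simp [hij, hjk, hik] <;> norm_num
        · intro l
          by_cases hl : l = i
          · subst hl; simp [e3, ← hij, ← hik, gm6]
          · have hlj : ¬ l = j := fun h => hl (h.trans hij.symm)
            have hlk : ¬ l = k := fun h => hl (h.trans hik.symm)
            simp [e3, hl, hlj, hlk, gm0]
      · -- i = j ≠ k
        have hik : ¬ i = k := fun h => hjk (hij.symm.trans h)
        rw [prod_gm_single _ i 3 ?_]
        · simp [hij, hjk, hik] <;> norm_num
        · intro l
          by_cases hl : l = i
          · subst hl; simp [e3, ← hij, hik, gm4]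
          · by_cases hlk : l = k
            · subst hlk
              have hlj : ¬ l = j := fun h => hl (h.trans hij.symm)
              simp [e3, hl, hlj, gm2]
            · have hlj : ¬ l = j := fun h => hl (h.trans hij.symm)
              simp [e3, hl, hlj, hlk, gm0]
    · by_cases hjk : j = k
      · -- j = k ≠ i
        have hik : ¬ i = k := fun h => hij (h.trans hjk.symm)
        rw [prod_gm_single _ j 3 ?_]
        · simp [hij, hjk, hik] <;> norm_num
        · intro l
          by_cases hl : l = j
          · subst hl
            have hli : ¬ l = i := fun h => hij h.symm
            simp [e3, hli, ← hjk, gm4]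
          · by_cases hli : l = i
            · subst hli; simp [e3, hl, hik, gm2]
            · have hlk : ¬ l = k := fun h => hl (h.trans hjk.symm)
              simp [e3, hl, hli, hlk, gm0]
      · by_cases hik : i = k
        · -- i = k ≠ j
          have hkj : ¬ k = j := fun h => hjk h.symm
          rw [prod_gm_single _ i 3 ?_]
          · simp [hij, hjk, hik, hkj] <;> norm_num
          · intro l
            by_cases hl : l = i
            · subst hl
              have hlj : ¬ l = j := hij
              simp [e3, hlj, ← hik, gm4]
            · by_cases hlj : l = j
              · subst hlj
                have hlk : ¬ l = k := fun h => hl (h.trans hik.symm)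
                simp [e3, hl, hlk, gm2]
              · have hlk : ¬ l = k := fun h => hl (h.trans hik.symm)
                simp [e3, hl, hlj, hlk, gm0]
        · -- all distinct
          have hval : ∀ l, gm (e3 i j k 2 2 2 l) = if l = i then (1:ℝ) else
              (if l = j then 1 else (if l = k then 1 else 1)) := by
            intro l
            by_cases hli : l = i
            · subst hli
              simp [e3, hij, hik, gm2]
            · by_cases hlj : l = j
              · subst hlj
                simp [e3, hli, hjk, gm2]
              · by_cases hlk : l = k
                · subst hlk; simp [e3, hli, hlj, gm2]
                · simp [e3, hli, hlj, hlk, gm0]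
          rw [Finset.prod_congr rfl (fun l _ => hval l)]
          simp [hij, hjk, hik]

/-- fourth-moment monomial with inner product weights -/
lemma T4 (i j k : Fin n) :
      ∫ y : Fin n → ℝ, y i ^ 1 * y j ^ 1 * y k ^ 2 ∂(Measure.pi fun _ : Fin n => gaussianReal 0 1)
        = (if i = j then (1:ℝ) else 0) * (1 + 2 * (if i = k then (1:ℝ) else 0)) := by
    rw [mono3_val]
    by_cases hij : i = j
    · by_cases hik : i = k
      · -- i = j = k
        have hjk : j = k := hij.symm.trans hik
        rw [prod_gm_single _ i 3 ?_]
        · simp [hij, hik, hjk] <;> norm_num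
        · intro l
          by_cases hl : l = i
          · subst hl; simp [e3, ← hij, ← hik, gm4]
          · have hlj : ¬ l = j := fun h => hl (h.trans hij.symm)
            have hlk : ¬ l = k := fun h => hl (h.trans hik.symm)
            simp [e3, hl, hlj, hlk, gm0]
      · -- i = j ≠ k
        have hjk : ¬ j = k := fun h => hik (hij.trans h)
        rw [prod_gm_single _ k 1 ?_]
        · simp [hij, hik, hjk] <;> norm_num
        · intro l
          by_cases hl : l = k
          · subst hl
            have h1 : ¬ l = i := fun h => hik h.symm
            have h2 : ¬ l = j := fun h => h1 (h.trans hij.symm)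
            simp [e3, h1, h2, gm2]
          · by_cases hli : l = i
            · subst hli; simp [e3, ← hij, hl, gm2]
            · have hlj : ¬ l = j := fun h => hli (h.trans hij.symm)
              simp [e3, hli, hl, hlj, gm0]
    · -- i ≠ j: zero
      rw [Finset.prod_eq_zero (Finset.mem_univ i) ?_]
      · simp [hij]
      · by_cases hik : i = k
        · have hkj : ¬ k = j := fun h => hij (hik.trans h)
          simp [e3, hik, hkj, gm3]
        · simp [e3, hij, hik, gm1]
lemma expandA (y : Fin n → ℝ) :
      (∑ i, y i ^ 2) ^ 3 = ∑ i, ∑ j, ∑ k, y i ^ 2 * y j ^ 2 * y k ^ 2 := by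
    rw [show (3:ℕ) = 2 + 1 from rfl, pow_succ, sq, Finset.sum_mul_sum, Finset.sum_mul]
    refine Finset.sum_congr rfl fun i _ => ?_
    rw [Finset.sum_mul]
    refine Finset.sum_congr rfl fun j _ => ?_
    rw [Finset.mul_sum]

lemma intA : Integrable (fun y : Fin n → ℝ => (∑ i, y i ^ 2) ^ 3)
      (Measure.pi fun _ : Fin n => gaussianReal 0 1) := by
    simp_rw [expandA]
    refine integrable_finset_sum _ fun i _ => integrable_finset_sum _ fun j _ =>
      integrable_finset_sum _ fun k _ => mono3_int i j k 2 2 2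

lemma valA : ∫ y : Fin n → ℝ, (∑ i, y i ^ 2) ^ 3 ∂(Measure.pi fun _ : Fin n => gaussianReal 0 1)
      = (n:ℝ)^3 + 6*(n:ℝ)^2 + 8*n := by
    simp_rw [expandA]
    rw [integral_finset_sum _ fun i _ => integrable_finset_sum _ fun j _ =>
      integrable_finset_sum _ fun k _ => mono3_int i j k 2 2 2]
    have h1 : ∀ i : Fin n, ∫ y : Fin n → ℝ, ∑ j, ∑ k, y i ^ 2 * y j ^ 2 * y k ^ 2
        ∂(Measure.pi fun _ : Fin n => gaussianReal 0 1)
        = ∑ j, ∑ k, ∫ y : Fin n → ℝ, y i ^ 2 * y j ^ 2 * y k ^ 2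
          ∂(Measure.pi fun _ : Fin n => gaussianReal 0 1) := by
      intro i
      rw [integral_finset_sum _ fun j _ => integrable_finset_sum _ fun k _ => mono3_int i j k 2 2 2]
      exact Finset.sum_congr rfl fun j _ =>
        integral_finset_sum _ fun k _ => mono3_int i j k 2 2 2
    rw [Finset.sum_congr rfl fun i _ => h1 i]
    simp_rw [T6]
    have hk : ∀ i j : Fin n, (∑ k : Fin n, ((1:ℝ)
          + 2 * ((if i = j then (1:ℝ) else 0) + (if j = k then (1:ℝ) else 0)
            + (if i = k then (1:ℝ) else 0))
          + 8 * ((if i = j then (1:ℝ) else 0) * (if j = k then (1:ℝ) else 0))))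
        = n + 4 + (2*n + 8) * (if i = j then (1:ℝ) else 0) := by
      intro i j
      by_cases hij : i = j
      · subst hij
        simp [Finset.sum_add_distrib, Finset.sum_ite_eq, ite_mul, mul_ite, Finset.sum_const,
          Finset.card_univ, mul_add]
        ring
      · simp [hij, Finset.sum_add_distrib, Finset.sum_ite_eq, ite_mul, mul_ite, Finset.sum_const,
          Finset.card_univ, mul_add]
        ring
    rw [Finset.sum_congr rfl fun i _ => Finset.sum_congr rfl fun j _ => hk i j]
    have hj : ∀ i : Fin n, (∑ j : Fin n, ((n:ℝ) + 4 + (2*n + 8) * (if i = j then (1:ℝ) else 0)))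
        = n * (n + 4) + (2*n + 8) := by
      intro i
      simp [Finset.sum_add_distrib, Finset.sum_ite_eq, ite_mul, mul_ite, Finset.sum_const,
        Finset.card_univ, mul_add]
      try ring
    rw [Finset.sum_congr rfl fun i _ => hj i]
    simp [Finset.sum_const, Finset.card_univ]
    ring

lemma expandB (g : Fin n → ℝ) (y : Fin n → ℝ) :
      (∑ i, g i * y i) ^ 2 * (∑ k, y k ^ 2)
        = ∑ i, ∑ j, ∑ k, (g i * g j) * (y i ^ 1 * y j ^ 1 * y k ^ 2) := by
    rw [sq, Finset.sum_mul_sum, Finset.sum_mul]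
    refine Finset.sum_congr rfl fun i _ => ?_
    rw [Finset.sum_mul]
    refine Finset.sum_congr rfl fun j _ => ?_
    rw [Finset.mul_sum]
    refine Finset.sum_congr rfl fun k _ => ?_
    ring

lemma intB (g : Fin n → ℝ) : Integrable (fun y : Fin n → ℝ => (∑ i, g i * y i) ^ 2 * (∑ k, y k ^ 2))
      (Measure.pi fun _ : Fin n => gaussianReal 0 1) := by
    simp_rw [expandB]
    refine integrable_finset_sum _ fun i _ => integrable_finset_sum _ fun j _ =>
      integrable_finset_sum _ fun k _ => ((mono3_int i j k 1 1 2).const_mul _)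

lemma valB (g : Fin n → ℝ) :
      ∫ y : Fin n → ℝ, (∑ i, g i * y i) ^ 2 * (∑ k, y k ^ 2)
        ∂(Measure.pi fun _ : Fin n => gaussianReal 0 1)
      = ((n:ℝ) + 2) * ∑ i, g i ^ 2 := by
    simp_rw [expandB]
    rw [integral_finset_sum _ fun i _ => integrable_finset_sum _ fun j _ =>
      integrable_finset_sum _ fun k _ => ((mono3_int i j k 1 1 2).const_mul _)]
    have h1 : ∀ i : Fin n, ∫ y : Fin n → ℝ, ∑ j, ∑ k, (g i * g j) * (y i ^ 1 * y j ^ 1 * y k ^ 2)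
        ∂(Measure.pi fun _ : Fin n => gaussianReal 0 1)
        = ∑ j, ∑ k, (g i * g j) * ∫ y : Fin n → ℝ, y i ^ 1 * y j ^ 1 * y k ^ 2
          ∂(Measure.pi fun _ : Fin n => gaussianReal 0 1) := by
      intro i
      rw [integral_finset_sum _ fun j _ => integrable_finset_sum _ fun k _ =>
        ((mono3_int i j k 1 1 2).const_mul _)]
      refine Finset.sum_congr rfl fun j _ => ?_
      rw [integral_finset_sum _ fun k _ => ((mono3_int i j k 1 1 2).const_mul _)]
      exact Finset.sum_congr rfl fun k _ => integral_const_mul _ _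
    rw [Finset.sum_congr rfl fun i _ => h1 i]
    simp_rw [T4]
    have hk : ∀ i j : Fin n, (∑ k : Fin n, g i * g j * ((if i = j then (1:ℝ) else 0)
          * (1 + 2 * (if i = k then (1:ℝ) else 0))))
        = g i * g j * (if i = j then (1:ℝ) else 0) * (n + 2) := by
      intro i j
      by_cases hij : i = j
      · subst hij
        simp [Finset.sum_add_distrib, Finset.sum_ite_eq, ite_mul, mul_ite, Finset.sum_const,
          Finset.card_univ, mul_add, mul_one, mul_zero]
        ring
      · simp [hij]
    rw [Finset.sum_congr rfl fun i _ => Finset.sum_congr rfl fun j _ => hk i j]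
    have hj : ∀ i : Fin n, (∑ j : Fin n, g i * g j * (if i = j then (1:ℝ) else 0) * ((n:ℝ) + 2))
        = g i ^ 2 * (n + 2) := by
      intro i
      simp [mul_ite, ite_mul, mul_one, mul_zero, zero_mul, Finset.sum_ite_eq, sq]
    rw [Finset.sum_congr rfl fun i _ => hj i]
    rw [← Finset.sum_mul, mul_comm]


lemma taylor_bound (f : EuclideanSpace ℝ (Fin n) → ℝ) (L : NNReal)
      (hdiff : Differentiable ℝ f) (hlip : LipschitzWith L (gradient f))
      (x v : EuclideanSpace ℝ (Fin n)) :
      |f (x + v) - f x - ⟪gradient f x, v⟫| ≤ (L : ℝ) / 2 * ‖v‖ ^ 2 := by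
    have hderiv : ∀ t : ℝ, HasDerivAt (fun t : ℝ => f (x + t • v))
        ⟪gradient f (x + t • v), v⟫ t := by
      intro t
      have h1 : HasDerivAt (fun t : ℝ => x + t • v) v t := by
        simpa using ((hasDerivAt_id t).smul_const v).const_add x
      have h2 := ((hdiff (x + t • v)).hasGradientAt.hasFDerivAt).comp_hasDerivAt t h1
      exact h2.congr_deriv (by simp [InnerProductSpace.toDual_apply_apply])
    have hcont : Continuous fun t : ℝ => ⟪gradient f (x + t • v), v⟫ := by
      apply Continuous.inner
      · exact hlip.continuous.comp (by continuity)
      · exact continuous_const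
    have hFTC := intervalIntegral.integral_eq_sub_of_hasDerivAt
      (f := fun t : ℝ => f (x + t • v)) (f' := fun t : ℝ => ⟪gradient f (x + t • v), v⟫)
      (a := 0) (b := 1) (fun t _ => hderiv t) (hcont.intervalIntegrable 0 1)
    have key : f (x + v) - f x - ⟪gradient f x, v⟫
        = ∫ t in (0:ℝ)..1, (⟪gradient f (x + t • v), v⟫ - ⟪gradient f x, v⟫) := by
      rw [intervalIntegral.integral_sub (hcont.intervalIntegrable 0 1)
        (intervalIntegrable_const), hFTC]
      simp
    rw [key]
    have hbound : ∀ t ∈ Set.Icc (0:ℝ) 1,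
        |⟪gradient f (x + t • v), v⟫ - ⟪gradient f x, v⟫| ≤ (L : ℝ) * ‖v‖ ^ 2 * t := by
      intro t ht
      rw [← inner_sub_left]
      calc |⟪gradient f (x + t • v) - gradient f x, v⟫|
          ≤ ‖gradient f (x + t • v) - gradient f x‖ * ‖v‖ := abs_real_inner_le_norm _ _
        _ ≤ (L : ℝ) * ‖(x + t • v) - x‖ * ‖v‖ := by
            gcongr
            exact hlip.norm_sub_le _ _
        _ = (L : ℝ) * ‖v‖ ^ 2 * t := by
            rw [add_sub_cancel_left, norm_smul, Real.norm_eq_abs, abs_of_nonneg ht.1]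
            ring
    calc |∫ t in (0:ℝ)..1, (⟪gradient f (x + t • v), v⟫ - ⟪gradient f x, v⟫)|
        ≤ |∫ t in (0:ℝ)..1, (L : ℝ) * ‖v‖ ^ 2 * t| := by
          rw [← Real.norm_eq_abs]
          apply intervalIntegral.norm_integral_le_abs_of_norm_le
          · rw [Set.uIoc_of_le zero_le_one]; filter_upwards [ae_restrict_mem measurableSet_Ioc] with t ht
            have := hbound t ⟨le_of_lt (by simpa using ht.1), by simpa using ht.2⟩
            simpa [Real.norm_eq_abs] using this
          · exact (by continuity : Continuous fun t : ℝ => (L:ℝ) * ‖v‖^2 * t).intervalIntegrable 0 1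
      _ = (L : ℝ) / 2 * ‖v‖ ^ 2 := by
          rw [intervalIntegral.integral_const_mul, integral_id]
          rw [abs_of_nonneg (by positivity)]
          ring
lemma es_norm_sq (y : Fin n → ℝ) :
    ‖(MeasurableEquiv.toLp 2 (Fin n → ℝ)) y‖ ^ 2 = ∑ i, y i ^ 2 := by
  rw [EuclideanSpace.norm_eq, Real.sq_sqrt (by positivity)]
  simp only [Real.norm_eq_abs, sq_abs]
  exact Finset.sum_congr rfl fun l _ => rfl

lemma es_inner (g : EuclideanSpace ℝ (Fin n)) (y : Fin n → ℝ) :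
    ⟪g, (MeasurableEquiv.toLp 2 (Fin n → ℝ)) y⟫ = ∑ i, g i * y i := by
  rw [PiLp.inner_apply]
  exact Finset.sum_congr rfl fun l _ => mul_comm _ _

lemma norm_sq_coords (g : EuclideanSpace ℝ (Fin n)) : ‖g‖ ^ 2 = ∑ i, g i ^ 2 := by
  rw [EuclideanSpace.norm_eq, Real.sq_sqrt (by positivity)]
  simp [Real.norm_eq_abs, sq_abs]

end NesterovAux

open NesterovAux in
/-- Nesterov's smoothing lemma, part (c).
If `f` has an `L_f`-Lipschitz gradient and `μ > 0`, then for every `x`,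
`(1/μ²)·E_u[(f(x+μu) − f(x))²·‖u‖²] ≤ (μ²/2)·L_f²·(n+6)³ + 2(n+4)·‖∇f(x)‖²`,
where `u ~ N(0, I_n)`. -/
theorem statement1 {n : ℕ} (f : EuclideanSpace ℝ (Fin n) → ℝ) (Lf μ : ℝ)
    (hLf : 0 ≤ Lf) (hμ : 0 < μ)
    (hdiff : Differentiable ℝ f)
    (hlip : LipschitzWith Lf.toNNReal (gradient f)) :
    ∀ x, (1 / μ ^ 2) *
        ∫ u, (f (x + μ • u) - f x) ^ 2 * ‖u‖ ^ 2 ∂(stdGaussian n)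
      ≤ μ ^ 2 / 2 * Lf ^ 2 * ((n : ℝ) + 6) ^ 3 + 2 * ((n : ℝ) + 4) * ‖gradient f x‖ ^ 2 := by
  intro x
  set gv := gradient f x with hgv
  have hL : ((Lf.toNNReal : NNReal) : ℝ) = Lf := Real.coe_toNNReal _ hLf
  -- pointwise domination
  have hpt : ∀ u : EuclideanSpace ℝ (Fin n),
      (f (x + μ • u) - f x) ^ 2 * ‖u‖ ^ 2
        ≤ 2 * μ ^ 2 * (⟪gv, u⟫ ^ 2 * ‖u‖ ^ 2) + Lf ^ 2 / 2 * μ ^ 4 * (‖u‖ ^ 2) ^ 3 := by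
    intro u
    have ht := taylor_bound f Lf.toNNReal hdiff hlip x (μ • u)
    rw [hL] at ht
    rw [real_inner_smul_right] at ht
    have hnv : ‖μ • u‖ ^ 2 = μ ^ 2 * ‖u‖ ^ 2 := by
      rw [norm_smul, mul_pow, Real.norm_eq_abs, sq_abs]
    rw [hnv] at ht
    have habs := abs_le.mp ht
    have h2 : (f (x + μ • u) - f x - μ * ⟪gv, u⟫) ^ 2
        ≤ (Lf / 2 * (μ ^ 2 * ‖u‖ ^ 2)) ^ 2 :=
      sq_le_sq' (by linarith [habs.1]) habs.2
    have h1 : (f (x + μ • u) - f x) ^ 2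
        ≤ 2 * (μ * ⟪gv, u⟫) ^ 2 + 2 * (f (x + μ • u) - f x - μ * ⟪gv, u⟫) ^ 2 := by
      nlinarith [sq_nonneg (f (x + μ • u) - f x - 2 * (μ * ⟪gv, u⟫))]
    have h3 : (f (x + μ • u) - f x) ^ 2
        ≤ 2 * (μ * ⟪gv, u⟫) ^ 2 + 2 * (Lf / 2 * (μ ^ 2 * ‖u‖ ^ 2)) ^ 2 := by linarith
    have hq : (0:ℝ) ≤ ‖u‖ ^ 2 := by positivity
    nlinarith [mul_le_mul_of_nonneg_right h3 hq]
  -- the dominating function and its integral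
  have hDint : Integrable (fun u : EuclideanSpace ℝ (Fin n) =>
      2 * μ ^ 2 * (⟪gv, u⟫ ^ 2 * ‖u‖ ^ 2) + Lf ^ 2 / 2 * μ ^ 4 * (‖u‖ ^ 2) ^ 3)
      (stdGaussian n) := by
    rw [_root_.stdGaussian, MeasureTheory.integrable_map_equiv]
    have heq : ((fun u : EuclideanSpace ℝ (Fin n) =>
        2 * μ ^ 2 * (⟪gv, u⟫ ^ 2 * ‖u‖ ^ 2) + Lf ^ 2 / 2 * μ ^ 4 * (‖u‖ ^ 2) ^ 3)
          ∘ (MeasurableEquiv.toLp 2 (Fin n → ℝ)))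
        = fun y : Fin n → ℝ =>
          2 * μ ^ 2 * ((∑ i, gv i * y i) ^ 2 * (∑ i, y i ^ 2))
            + Lf ^ 2 / 2 * μ ^ 4 * (∑ i, y i ^ 2) ^ 3 := by
      funext y
      simp only [Function.comp_apply, es_norm_sq, es_inner]
    rw [heq]
    exact ((intB fun i => gv i).const_mul _).add (intA.const_mul _)
  have hDval : ∫ u, (2 * μ ^ 2 * (⟪gv, u⟫ ^ 2 * ‖u‖ ^ 2)
        + Lf ^ 2 / 2 * μ ^ 4 * (‖u‖ ^ 2) ^ 3) ∂(stdGaussian n)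
      = 2 * μ ^ 2 * (((n:ℝ) + 2) * ∑ i, gv i ^ 2)
        + Lf ^ 2 / 2 * μ ^ 4 * ((n:ℝ) ^ 3 + 6 * (n:ℝ) ^ 2 + 8 * n) := by
    rw [_root_.stdGaussian, MeasureTheory.integral_map_equiv]
    have heq : ∀ y : Fin n → ℝ,
        2 * μ ^ 2 * (⟪gv, (MeasurableEquiv.toLp 2 (Fin n → ℝ)) y⟫ ^ 2
            * ‖(MeasurableEquiv.toLp 2 (Fin n → ℝ)) y‖ ^ 2)
          + Lf ^ 2 / 2 * μ ^ 4 * (‖(MeasurableEquiv.toLp 2 (Fin n → ℝ)) y‖ ^ 2) ^ 3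
        = 2 * μ ^ 2 * ((∑ i, gv i * y i) ^ 2 * (∑ i, y i ^ 2))
            + Lf ^ 2 / 2 * μ ^ 4 * (∑ i, y i ^ 2) ^ 3 := by
      intro y
      simp only [es_norm_sq, es_inner]
    rw [integral_congr_ae (ae_of_all _ heq)]
    rw [integral_add (((intB fun i => gv i).const_mul _)) (intA.const_mul _),
      integral_const_mul, integral_const_mul, valA, valB]
  -- compare
  have hmono := integral_mono_of_nonneg
    (ae_of_all _ fun u => by positivity) hDint (ae_of_all _ hpt)
  have hstep : (1 / μ ^ 2) * ∫ u, (f (x + μ • u) - f x) ^ 2 * ‖u‖ ^ 2 ∂(stdGaussian n)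
      ≤ (1 / μ ^ 2) * (2 * μ ^ 2 * (((n:ℝ) + 2) * ∑ i, gv i ^ 2)
        + Lf ^ 2 / 2 * μ ^ 4 * ((n:ℝ) ^ 3 + 6 * (n:ℝ) ^ 2 + 8 * n)) := by
    rw [← hDval]
    exact mul_le_mul_of_nonneg_left hmono (by positivity)
  refine hstep.trans ?_
  rw [← norm_sq_coords]
  have hμ2 : (0:ℝ) < μ ^ 2 := by positivity
  have hval : (1 / μ ^ 2) * (2 * μ ^ 2 * (((n:ℝ) + 2) * ‖gv‖ ^ 2)
        + Lf ^ 2 / 2 * μ ^ 4 * ((n:ℝ) ^ 3 + 6 * (n:ℝ) ^ 2 + 8 * n))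
      = 2 * (((n:ℝ) + 2)) * ‖gv‖ ^ 2
        + μ ^ 2 / 2 * Lf ^ 2 * ((n:ℝ) ^ 3 + 6 * (n:ℝ) ^ 2 + 8 * n) := by
    field_simp
  rw [hval]
  have hn : (0:ℝ) ≤ (n:ℝ) := Nat.cast_nonneg n
  have hc : (0:ℝ) ≤ μ ^ 2 * Lf ^ 2 := by positivity
  nlinarith [mul_nonneg hc hn, mul_nonneg (mul_nonneg hc hn) hn, hc, sq_nonneg ‖gv‖]

end
end

section
/- (Optimality inequality for the block prox mapping.) Let x ∈ X, g ∈ ℝ^n, α > 0, and let x⁺ ∈ X be defined blockwise by U_sᵀx⁺ = P_s(U_sᵀx, U_sᵀg, α) for s = 1,…,b. Then for each s = 1,…,b: ⟨g^{(s)}, 𝒫_s(x, U_s g^{(s)}, α)⟩ ≥ ‖𝒫_s(x, U_s g^{(s)}, α)‖² + (1/α)·[χ_s(U_sᵀx⁺) − χ_s(U_sᵀx)]. -/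
open scoped RealInnerProductSpace

noncomputable section

-- auxiliary: first-order strong convexity bound
lemma strong_tangent {m : ℕ} (φ : EuclideanSpace ℝ (Fin m) → ℝ)
    (hφd : Differentiable ℝ φ) (hφsc : StrongConvexOn Set.univ 1 φ)
    (x y : EuclideanSpace ℝ (Fin m)) :
    φ x + ⟪gradient φ x, y - x⟫ + 1/2 * ‖y - x‖^2 ≤ φ y := by
  set v := y - x with hv
  have hconv : ConvexOn ℝ Set.univ (fun z => φ z - 1/2 * ‖z‖^2) := by
    have := strongConvexOn_iff_convex.mp hφsc
    simpa using this
  -- the 1-D restriction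
  set ψ : ℝ → ℝ := fun t => φ (x + t • v) - 1/2 * ‖x + t • v‖^2 with hψ
  have hψconv : ConvexOn ℝ Set.univ ψ := by
    have h := hconv.comp_affineMap (AffineMap.lineMap x y)
    have heq : (fun z => φ z - 1/2 * ‖z‖^2) ∘ (AffineMap.lineMap x y) = ψ := by
      funext t
      simp [ψ, AffineMap.lineMap_apply_module', v, add_comm]
    rw [heq] at h
    simpa using h
  have hc : HasDerivAt (fun t : ℝ => x + t • v) v 0 := by
    simpa using ((hasDerivAt_id (0:ℝ)).smul_const v).const_add x
  have hd1 : HasDerivAt (fun t : ℝ => φ (x + t • v)) (⟪gradient φ x, v⟫) 0 := by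
    have hx0 : x + (0:ℝ) • v = x := by simp
    have h := (hx0 ▸ (hφd x).hasFDerivAt).comp_hasDerivAt 0 hc
    have : (fderiv ℝ φ x) v = ⟪gradient φ x, v⟫ := by
      rw [gradient]; exact (InnerProductSpace.toDual_symm_apply).symm
    rw [hx0] at h; rw [← this]; exact h
  have hd2 : HasDerivAt (fun t : ℝ => 1/2 * ‖x + t • v‖^2) (⟪x, v⟫) 0 := by
    have heq : (fun t : ℝ => 1/2 * ‖x + t • v‖^2)
        = fun t : ℝ => 1/2*‖x‖^2 + ⟪x, v⟫ * t + 1/2*‖v‖^2 * t^2 := by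
      funext t
      rw [norm_add_sq_real]
      rw [norm_smul, real_inner_smul_right]
      simp [mul_pow]
      ring
    rw [heq]
    have : HasDerivAt (fun t : ℝ => 1/2*‖x‖^2 + ⟪x, v⟫ * t + 1/2*‖v‖^2 * t^2)
        (0 + ⟪x, v⟫ * 1 + 1/2*‖v‖^2 * (2 * 0^1)) 0 := by
      exact ((hasDerivAt_const _ _).add ((hasDerivAt_id 0).const_mul _)).add
        ((hasDerivAt_pow 2 (0:ℝ)).const_mul _)
    simpa using this
  have hψd : HasDerivAt ψ (⟪gradient φ x, v⟫ - ⟪x, v⟫) 0 := hd1.sub hd2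
  have hslope := hψconv.le_slope_of_hasDerivAt (Set.mem_univ 0) (Set.mem_univ 1) one_pos hψd
  rw [slope_def_field] at hslope
  have hψ1 : ψ 1 = φ y - 1/2 * ‖y‖^2 := by simp [ψ, v]
  have hψ0 : ψ 0 = φ x - 1/2 * ‖x‖^2 := by simp [ψ]
  rw [hψ1, hψ0] at hslope
  have hexp : ‖y - x‖^2 = ‖y‖^2 - 2 * ⟪x, y⟫ + ‖x‖^2 := by
    rw [norm_sub_sq_real, real_inner_comm]
  have hinner : ⟪x, v⟫ = ⟪x, y⟫ - ⟪x, x⟫ := by rw [hv, inner_sub_right]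
  have hxx : ⟪x, x⟫ = ‖x‖^2 := real_inner_self_eq_norm_sq x
  nlinarith [hslope]

/-- Optimality inequality for the block prox mapping, stated for a generic
block `s`.  Here `V = ℝ^{n_s}` is the block space, `Xs = X_s`, `χ = χ_s`, `φ = φ_s` is a
differentiable 1-strongly convex distance generating function, `xp = P_s(x^{(s)}, g^{(s)}, α)`
is a minimizer of `y ↦ ⟨g^{(s)},y⟩ + (1/α)D_φ(y,x^{(s)}) + χ(y)` over `X_s`, and
`(1/α)•(x − xp)` is the generalized block gradient mapping `𝒫_s(x, U_s g^{(s)}, α)`.  Then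
`⟨g^{(s)}, 𝒫_s⟩ ≥ ‖𝒫_s‖² + (1/α)(χ(x⁺^{(s)}) − χ(x^{(s)}))`. -/
theorem statement5 {m : ℕ}
    (Xs : Set (EuclideanSpace ℝ (Fin m))) (hXsc : Convex ℝ Xs) (hXscl : IsClosed Xs)
    (χ : EuclideanSpace ℝ (Fin m) → ℝ) (hχ : ConvexOn ℝ Set.univ χ)
    (φ : EuclideanSpace ℝ (Fin m) → ℝ) (hφd : Differentiable ℝ φ)
    (hφsc : StrongConvexOn Set.univ 1 φ)
    (x : EuclideanSpace ℝ (Fin m)) (hx : x ∈ Xs)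
    (g : EuclideanSpace ℝ (Fin m)) (α : ℝ) (hα : 0 < α)
    (xp : EuclideanSpace ℝ (Fin m)) (hxpXs : xp ∈ Xs)
    (hxpmin : ∀ y ∈ Xs,
      ⟪g, xp⟫ + (1 / α) * (φ xp - φ x - ⟪gradient φ x, xp - x⟫) + χ xp
        ≤ ⟪g, y⟫ + (1 / α) * (φ y - φ x - ⟪gradient φ x, y - x⟫) + χ y) :
    ⟪g, (1 / α) • (x - xp)⟫ ≥ ‖(1 / α) • (x - xp)‖ ^ 2 + (1 / α) * (χ xp - χ x) := by
  have hα1 : 0 < 1 / α := by positivity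
  set G := gradient φ x with hG
  set D' : ℝ := φ xp - φ x - ⟪G, xp - x⟫ with hD'
  -- Step 1: key inequality for each t ∈ (0,1)
  have key : ∀ t : ℝ, 0 < t → t < 1 →
      ⟪g, xp⟫ + (1/α) * D' + χ xp + (1/α) * ((1-t)/2 * ‖x - xp‖^2)
        ≤ ⟪g, x⟫ + χ x := by
    intro t ht0 ht1
    have ht1' : (0:ℝ) ≤ 1 - t := by linarith
    have hyt : t • x + (1-t) • xp ∈ Xs := hXsc hx hxpXs ht0.le ht1' (by ring)
    have h1 := hxpmin _ hyt
    have h2 := hφsc.2 (Set.mem_univ x) (Set.mem_univ xp) ht0.le ht1' (by ring)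
    have h3 := hχ.2 (Set.mem_univ x) (Set.mem_univ xp) ht0.le ht1' (by ring)
    simp only [smul_eq_mul] at h2 h3
    have hg : ⟪g, t • x + (1-t) • xp⟫ = t * ⟪g, x⟫ + (1-t) * ⟪g, xp⟫ := by
      rw [inner_add_right, real_inner_smul_right, real_inner_smul_right]
    have hGe : ⟪G, (t • x + (1-t) • xp) - x⟫ = (1-t) * ⟪G, xp - x⟫ := by
      have : (t • x + (1-t) • xp) - x = (1-t) • (xp - x) := by
        rw [smul_sub]; module
      rw [this, real_inner_smul_right]
    rw [hg, hGe] at h1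
    -- bound the φ and χ values at the combination
    have h4 : t * (⟪g, xp⟫ + (1/α) * D' + χ xp + (1/α) * ((1-t)/2 * ‖x - xp‖^2))
        ≤ t * (⟪g, x⟫ + χ x) := by
      have h2' := mul_le_mul_of_nonneg_left h2 hα1.le
      nlinarith [h1, h2', h3]
    exact le_of_mul_le_mul_left (by linarith [h4]) ht0
  -- Step 2: take t → 0 along the sequence 1/(n+2)
  have hseq : Filter.Tendsto (fun n : ℕ => ((n:ℝ)+2)⁻¹) Filter.atTop (nhds 0) :=
    tendsto_inv_atTop_zero.comp (Filter.tendsto_atTop_add_const_right _ 2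
      tendsto_natCast_atTop_atTop)
  have hlim : Filter.Tendsto
      (fun n : ℕ => ⟪g, xp⟫ + (1/α) * D' + χ xp + (1/α) * ((1-((n:ℝ)+2)⁻¹)/2 * ‖x - xp‖^2))
      Filter.atTop
      (nhds (⟪g, xp⟫ + (1/α) * D' + χ xp + (1/α) * ((1-(0:ℝ))/2 * ‖x - xp‖^2))) := by
    apply Filter.Tendsto.const_add
    apply Filter.Tendsto.const_mul
    apply Filter.Tendsto.mul_const
    exact (Filter.Tendsto.const_sub _ hseq).div_const 2
  have final : ⟪g, xp⟫ + (1/α) * D' + χ xp + (1/α) * (1/2 * ‖x - xp‖^2)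
      ≤ ⟪g, x⟫ + χ x := by
    have h := le_of_tendsto hlim (Filter.Eventually.of_forall (fun n => by
      refine key _ ?_ ?_
      · positivity
      · rw [inv_lt_one_iff₀]; right; push_cast; linarith [Nat.cast_nonneg (α := ℝ) n]))
    simpa using h
  -- Step 3: lower bound on D'
  have hDlb : 1/2 * ‖x - xp‖^2 ≤ D' := by
    have h := strong_tangent φ hφd hφsc x xp
    have : ‖xp - x‖ = ‖x - xp‖ := norm_sub_rev _ _
    rw [this] at h
    rw [hD', hG]; linarith
  -- Step 4: assemble
  have hmain : ⟪g, x⟫ - ⟪g, xp⟫ ≥ (1/α) * ‖x - xp‖^2 + (χ xp - χ x) := by nlinarith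
  have hinner : ⟪g, (1 / α) • (x - xp)⟫ = (1/α) * (⟪g, x⟫ - ⟪g, xp⟫) := by
    rw [real_inner_smul_right, inner_sub_right]
  have hnorm : ‖(1 / α) • (x - xp)‖ ^ 2 = (1/α)^2 * ‖x - xp‖^2 := by
    rw [norm_smul, mul_pow, Real.norm_eq_abs, sq_abs]
  rw [hinner, hnorm]
  nlinarith [mul_le_mul_of_nonneg_left hmain hα1.le]

end
end

section
/- (Error bound for approximate block prox points.) For s ∈ {1,…,b}, x ∈ X_s, g ∈ ℝ^{n_s}, α > 0 and δ > 0, let P_s(x, g, α) = argmin_{y∈X_s}{⟨g, y⟩ + (1/α)D_{φ_s}(y, x) + χ_s(y)}, and let P_s^δ(x, g, α) ∈ X_s be any point satisfying ⟨g + (1/α)[∇φ_s(P_s^δ(x,g,α)) − ∇φ_s(x)], u − P_s^δ(x,g,α)⟩ + χ_s(u) − χ_s(P_s^δ(x,g,α)) ≥ −δ for all u ∈ X_s. Then ‖P_s(x,g,α) − P_s^δ(x,g,α)‖² ≤ α·δ. -/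
open scoped RealInnerProductSpace

noncomputable section

open Filter Set

lemma gradB {E : Type*} [NormedAddCommGroup E] [InnerProductSpace ℝ E] [CompleteSpace E]
    (φ : E → ℝ) (hφd : Differentiable ℝ φ)
    (hφsc : StrongConvexOn Set.univ 1 φ) (z y : E) :
    ⟪gradient φ z, y - z⟫ + (1/2)*‖y - z‖^2 ≤ φ y - φ z := by
  set v := y - z with hv
  have hF : HasFDerivAt φ ((InnerProductSpace.toDual ℝ E) (gradient φ z)) z :=
    hasGradientAt_iff_hasFDerivAt.mp (hφd z).hasGradientAt
  have hc : HasDerivAt (fun t : ℝ => z + t • v) v 0 := by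
    have h1 : HasDerivAt (fun t : ℝ => t • v) v 0 := by
      simpa using (hasDerivAt_id (0:ℝ)).smul_const v
    simpa using h1.const_add z
  have hg : HasDerivAt (fun t : ℝ => φ (z + t • v)) (⟪gradient φ z, v⟫) 0 := by
    have hF' : HasFDerivAt φ ((InnerProductSpace.toDual ℝ E) (gradient φ z)) (z + (0:ℝ) • v) := by
      simpa using hF
    have h2 := hF'.comp_hasDerivAt (0:ℝ) hc
    simpa [Function.comp, InnerProductSpace.toDual_apply_apply] using (show HasDerivAt (fun t : ℝ => φ (z + t • v)) _ 0 from h2)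
  have hslope : Tendsto (slope (fun t : ℝ => φ (z + t • v)) 0) (nhdsWithin 0 (Set.Ioi 0))
      (nhds (⟪gradient φ z, v⟫)) := by
    have := hasDerivAt_iff_tendsto_slope.mp hg
    exact this.mono_left (nhdsWithin_mono 0 (fun t ht => ne_of_gt ht))
  have hR : Tendsto (fun t : ℝ => (φ y - φ z) - (1 - t) * (1/2*‖v‖^2))
      (nhdsWithin (0:ℝ) (Set.Ioi 0)) (nhds ((φ y - φ z) - (1/2)*‖v‖^2)) := by
    have hcont : Continuous (fun t : ℝ => (φ y - φ z) - (1 - t) * (1/2*‖v‖^2)) := by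
      continuity
    exact (hcont.tendsto' 0 _ (by norm_num)).mono_left nhdsWithin_le_nhds
  have hev : ∀ᶠ t in nhdsWithin (0:ℝ) (Set.Ioi 0),
      slope (fun t : ℝ => φ (z + t • v)) 0 t ≤ (φ y - φ z) - (1 - t) * (1/2*‖v‖^2) := by
    filter_upwards [Ioo_mem_nhdsGT_of_mem (Set.left_mem_Ico.mpr one_pos)] with t ht
    have hz : z + t • v = t • y + (1 - t) • z := by
      rw [hv]; module
    have h0b : (0:ℝ) ≤ 1 - t := by linarith [ht.2]
    have hab : t + (1 - t) = 1 := by ring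
    have hsc := hφsc.2 (Set.mem_univ y) (Set.mem_univ z) ht.1.le h0b hab
    have hsc' : φ (t • y + (1 - t) • z) ≤ t * φ y + (1 - t) * φ z - t * (1 - t) * (1/2*‖y - z‖^2) := by
      simpa using hsc
    rw [slope_def_field, hz]
    rw [div_le_iff₀ (by linarith [ht.1] : (0:ℝ) < t - 0)]
    simp only [zero_smul, add_zero]
    have hvv : (1:ℝ) / 2 * ‖y - z‖ ^ 2 = 1/2*‖v‖^2 := by rw [hv]
    nlinarith [hsc', ht.1, ht.2]
  have hfin := le_of_tendsto_of_tendsto hslope hR hev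
  linarith


set_option maxHeartbeats 1000000 in
/-- Error bound for approximate block prox points, stated for a generic
block `s`.  If `pex = P_s(x, g, α)` is the exact prox point (a minimizer over `X_s` of
`y ↦ ⟨g,y⟩ + (1/α)D_{φ}(y,x) + χ(y)`) and `pδ ∈ X_s` satisfies the `δ`-approximate
variational inequality
`⟨g + (1/α)[∇φ(pδ) − ∇φ(x)], u − pδ⟩ + χ(u) − χ(pδ) ≥ −δ` for all `u ∈ X_s`,
then `‖pex − pδ‖² ≤ α·δ`. -/
theorem statement18 {m : ℕ}
    (Xs : Set (EuclideanSpace ℝ (Fin m))) (hXsc : Convex ℝ Xs) (hXscl : IsClosed Xs)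
    (χ : EuclideanSpace ℝ (Fin m) → ℝ) (hχ : ConvexOn ℝ Set.univ χ)
    (φ : EuclideanSpace ℝ (Fin m) → ℝ) (hφd : Differentiable ℝ φ)
    (hφsc : StrongConvexOn Set.univ 1 φ)
    (x : EuclideanSpace ℝ (Fin m)) (hx : x ∈ Xs)
    (g : EuclideanSpace ℝ (Fin m)) (α δ : ℝ) (hα : 0 < α) (hδ : 0 < δ)
    (pex : EuclideanSpace ℝ (Fin m)) (hpexXs : pex ∈ Xs)
    (hpexmin : ∀ y ∈ Xs,
      ⟪g, pex⟫ + (1 / α) * (φ pex - φ x - ⟪gradient φ x, pex - x⟫) + χ pex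
        ≤ ⟪g, y⟫ + (1 / α) * (φ y - φ x - ⟪gradient φ x, y - x⟫) + χ y)
    (pδ : EuclideanSpace ℝ (Fin m)) (hpδXs : pδ ∈ Xs)
    (hpδ : ∀ u ∈ Xs,
      ⟪g + (1 / α) • (gradient φ pδ - gradient φ x), u - pδ⟫ + χ u - χ pδ ≥ -δ) :
    ‖pex - pδ‖ ^ 2 ≤ α * δ := by
  set c : ℝ := 1 / α with hcdef
  have hc0 : 0 < c := by positivity
  have hαc : α * c = 1 := by rw [hcdef]; field_simp
  set G := gradient φ x with hGdef
  set N := ‖pex - pδ‖ ^ 2 with hNdef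
  have hN0 : 0 ≤ N := by rw [hNdef]; positivity
  -- Bregman / strong convexity lower bound at pδ
  have hD : ⟪gradient φ pδ, pex - pδ⟫ + (1/2)*N ≤ φ pex - φ pδ := by
    rw [hNdef]; exact gradB φ hφd hφsc pδ pex
  -- approximate VI at u = pex, expanded
  have hVI : ⟪g, pex - pδ⟫ + c * ⟪gradient φ pδ, pex - pδ⟫ - c * ⟪G, pex - pδ⟫
      + χ pex - χ pδ ≥ -δ := by
    have h := hpδ pex hpexXs
    simp only [inner_add_left, inner_sub_left, real_inner_smul_left] at h
    linarith
  set Fex : ℝ := ⟪g, pex⟫ + c * (φ pex - φ x - ⟪G, pex - x⟫) + χ pex with hFex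
  set Fδv : ℝ := ⟪g, pδ⟫ + c * (φ pδ - φ x - ⟪G, pδ - x⟫) + χ pδ with hFδ
  -- inner product expansions
  have eg1 : ⟪g, pex - pδ⟫ = ⟪g, pex⟫ - ⟪g, pδ⟫ := inner_sub_right _ _ _
  have eg2 : c * ⟪G, pex - pδ⟫ = c * (⟪G, pex - x⟫ - ⟪G, pδ - x⟫) := by
    rw [show (⟪G, pex - pδ⟫ : ℝ) = ⟪G, pex - x⟫ - ⟪G, pδ - x⟫ by
      simp [inner_sub_right]]
  -- Step 3: F pδ - F pex ≤ δ - c * (N/2)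
  have hD' : c * (⟪gradient φ pδ, pex - pδ⟫ + (1/2)*N) ≤ c * (φ pex - φ pδ) :=
    mul_le_mul_of_nonneg_left hD hc0.le
  have h3 : Fδv - Fex ≤ δ - c * ((1/2)*N) := by
    rw [hFex, hFδ]
    nlinarith [hVI, hD', eg1, eg2]
  -- Step 4: for each t ∈ (0,1), (2 - t)*N ≤ 2*(α*δ)
  have key : ∀ t ∈ Set.Ioo (0:ℝ) 1, (2 - t) * N ≤ 2 * (α * δ) := by
    intro t ht
    have h0a : (0:ℝ) ≤ 1 - t := by linarith [ht.2]
    have hab : (1 - t) + t = 1 := by ring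
    set yt := (1 - t) • pex + t • pδ with hyt
    have hytXs : yt ∈ Xs := hXsc hpexXs hpδXs h0a ht.1.le hab
    have hmin := hpexmin yt hytXs
    have hφc : φ yt ≤ (1 - t) * φ pex + t * φ pδ - (1 - t) * t * (1/2*N) := by
      have := hφsc.2 (Set.mem_univ pex) (Set.mem_univ pδ) h0a ht.1.le hab
      rw [hNdef]
      simpa using this
    have hχc : χ yt ≤ (1 - t) * χ pex + t * χ pδ := by
      simpa using hχ.2 (Set.mem_univ pex) (Set.mem_univ pδ) h0a ht.1.le hab
    have e1 : ⟪g, yt⟫ = (1 - t) * ⟪g, pex⟫ + t * ⟪g, pδ⟫ := by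
      rw [hyt]; simp only [inner_add_right, real_inner_smul_right]
    have e2 : ⟪G, yt - x⟫ = (1 - t) * ⟪G, pex - x⟫ + t * ⟪G, pδ - x⟫ := by
      rw [hyt]; simp only [inner_sub_right, inner_add_right, real_inner_smul_right]; ring
    -- strong convexity of the whole objective
    have hb : c * (φ yt - φ x - ⟪G, yt - x⟫)
        ≤ c * (((1 - t) * φ pex + t * φ pδ - (1 - t) * t * (1/2*N)) - φ x
            - ((1 - t) * ⟪G, pex - x⟫ + t * ⟪G, pδ - x⟫)) := by
      apply mul_le_mul_of_nonneg_left _ hc0.le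
      rw [e2]; linarith
    have hC : Fex ≤ (1 - t) * Fex + t * Fδv - c * ((1 - t) * (t * ((1/2)*N))) := by
      have hEq : (1 - t) * Fex + t * Fδv - c * ((1 - t) * (t * ((1/2)*N)))
          = ((1 - t) * ⟪g, pex⟫ + t * ⟪g, pδ⟫)
            + c * (((1 - t) * φ pex + t * φ pδ - (1 - t) * t * (1/2*N)) - φ x
              - ((1 - t) * ⟪G, pex - x⟫ + t * ⟪G, pδ - x⟫))
            + ((1 - t) * χ pex + t * χ pδ) := by
        rw [hFex, hFδ]; ring
      rw [hEq]
      calc Fex ≤ ⟪g, yt⟫ + c * (φ yt - φ x - ⟪G, yt - x⟫) + χ yt := hmin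
        _ ≤ _ := by rw [e1]; linarith [hb, hχc]
    have h4 : c * ((1 - t) * ((1/2)*N)) ≤ Fδv - Fex := by
      have ht' : t * (c * ((1 - t) * ((1/2)*N))) ≤ t * (Fδv - Fex) := by nlinarith [hC]
      exact le_of_mul_le_mul_left ht' ht.1
    -- combine with step 3 and clear c = 1/α
    have h5 : c * ((1 - t) * ((1/2)*N)) + c * ((1/2)*N) ≤ δ := by linarith
    have h6 := mul_le_mul_of_nonneg_left h5 hα.le
    calc (2 - t) * N = 2 * ((α * c) * ((1 - t) * ((1/2)*N) + (1/2)*N)) := by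
            rw [hαc]; ring
      _ = 2 * (α * (c * ((1 - t) * ((1/2)*N)) + c * ((1/2)*N))) := by ring
      _ ≤ 2 * (α * δ) := by linarith
  -- take the limit t → 0⁺
  have hlim : Tendsto (fun t : ℝ => (2 - t) * N) (nhdsWithin (0:ℝ) (Set.Ioi 0))
      (nhds (2 * N)) := by
    have hcont : Continuous (fun t : ℝ => (2 - t) * N) := by continuity
    exact (hcont.tendsto' 0 _ (by ring)).mono_left nhdsWithin_le_nhds
  have h2N : 2 * N ≤ 2 * (α * δ) := by
    refine le_of_tendsto hlim ?_
    filter_upwards [Ioo_mem_nhdsGT_of_mem (Set.left_mem_Ico.mpr one_pos)] with t ht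
    exact key t ht
  linarith


end
end
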